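/- arXiv:0906.3804 — 7 statements merged into one kernel-verified Lean document; each statement's English description precedes it below -/
import Mathlib

section
/- For every t ∈ [0,T], the function Υ_s := Im g(s) / ‖w(s)‖ is differentiable at t with derivative ∂_t Υ_t = −Υ_t · 2a·Y_t² / ‖Z_t‖⁴, where Z_t = g(t) − V(t) and Y_t = Im Z_t. In particular, t ↦ Υ_t is nonincreasing on [0,T]. -/
open Complex Set

lemma hasDerivWithinAt_im_comp {f : ℝ → ℂ} {c : ℂ} {s : Set ℝ} {t : ℝ}
    (h : HasDerivWithinAt f c s t) :
    HasDerivWithinAt (fun s => (f s).im) c.im s t := by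
  exact (Complex.imCLM.hasFDerivAt.comp_hasDerivWithinAt t h)

lemma hasDerivWithinAt_re_comp {f : ℝ → ℂ} {c : ℂ} {s : Set ℝ} {t : ℝ}
    (h : HasDerivWithinAt f c s t) :
    HasDerivWithinAt (fun s => (f s).re) c.re s t := by
  exact (Complex.reCLM.hasFDerivAt.comp_hasDerivWithinAt t h)

lemma loewner_key (a : ℝ) (s : Set ℝ) (t : ℝ) (g w : ℝ → ℂ) (v : ℝ)
    (hZ0 : g t - (v:ℂ) ≠ 0) (hw0 : w t ≠ 0)
    (hgd : HasDerivWithinAt g ((a:ℂ)/(g t - (v:ℂ))) s t)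
    (hwd : HasDerivWithinAt w (-(a:ℂ) * w t/(g t - (v:ℂ))^2) s t) :
    HasDerivWithinAt (fun s => (g s).im / ‖w s‖)
      (-((g t).im / ‖w t‖) * (2 * a * ((g t - (v:ℂ)).im) ^ 2 / ‖g t - (v:ℂ)‖ ^ 4)) s t := by
  set Z : ℂ := g t - (v:ℂ) with hZ
  have hu : HasDerivWithinAt (fun s => (g s).im) ((a:ℂ)/Z).im s t :=
    hasDerivWithinAt_im_comp hgd
  set c : ℂ := -(a:ℂ) * w t / Z^2 with hc
  have hre := hasDerivWithinAt_re_comp hwd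
  have him := hasDerivWithinAt_im_comp hwd
  have hq : HasDerivWithinAt (fun s => Complex.normSq (w s))
      (c.re * (w t).re + (w t).re * c.re + (c.im * (w t).im + (w t).im * c.im)) s t := by
    have := (hre.mul hre).add (him.mul him)
    have e : (fun s => Complex.normSq (w s)) = fun s => (w s).re * (w s).re + (w s).im * (w s).im := by
      funext s; simp [Complex.normSq_apply]
    rw [e]; exact this
  have hq0 : Complex.normSq (w t) ≠ 0 := (Complex.normSq_pos.mpr hw0).ne'
  have hv : HasDerivWithinAt (fun s => Real.sqrt (Complex.normSq (w s)))
      ((1 / (2 * Real.sqrt (Complex.normSq (w t)))) *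
        (c.re * (w t).re + (w t).re * c.re + (c.im * (w t).im + (w t).im * c.im))) s t :=
    (Real.hasDerivAt_sqrt hq0).comp_hasDerivWithinAt t hq
  have hfun : (fun s => Real.sqrt (Complex.normSq (w s))) = fun s => ‖w s‖ := by
    funext s; rw [Complex.norm_def]
  have hnv : Real.sqrt (Complex.normSq (w t)) = ‖w t‖ := by
    rw [Complex.norm_def]
  rw [hfun, hnv] at hv
  have hn : ‖w t‖ ≠ 0 := norm_ne_zero_iff.mpr hw0
  have hdiv := hu.div hv hn
  refine hdiv.congr_deriv ?_
  -- now a scalar identity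
  have hmul : (starRingEnd ℂ) (w t) * c = (Complex.normSq (w t) : ℂ) * (-(a:ℂ)/Z^2) := by
    rw [hc, ← Complex.mul_conj (w t)]
    ring
  have hS : c.re * (w t).re + (w t).re * c.re + (c.im * (w t).im + (w t).im * c.im)
      = 2 * (Complex.normSq (w t) * (-(a:ℂ)/Z^2).re) := by
    have h := congrArg Complex.re hmul
    simp only [Complex.mul_re, Complex.conj_re, Complex.conj_im, Complex.ofReal_re,
      Complex.ofReal_im, zero_mul, sub_zero, neg_mul, neg_neg] at h
    linarith [h]
  rw [hS]
  have hnsq : Complex.normSq (w t) = ‖w t‖ ^ 2 := by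
    rw [Complex.sq_norm]
  rw [hnsq]
  have hgim : (g t).im = Z.im := by simp [hZ]
  have hZsq : Z.re ^ 2 + Z.im ^ 2 ≠ 0 := by
    have := (Complex.normSq_pos.mpr hZ0).ne'
    rwa [Complex.normSq_apply, ← pow_two, ← pow_two] at this
  have h1 : ((a:ℂ)/Z).im = -a * Z.im / (Z.re^2 + Z.im^2) := by
    rw [Complex.div_im]
    simp [Complex.normSq_apply]
    ring
  have h2 : (-(a:ℂ)/Z^2).re = -a * (Z.re^2 - Z.im^2) / (Z.re^2 + Z.im^2)^2 := by
    rw [Complex.div_re, map_pow, Complex.normSq_apply]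
    simp [pow_two, Complex.mul_re, Complex.mul_im]
  have hm4 : ‖Z‖ ^ 4 = ((Z.re ^ 2 + Z.im ^ 2)) ^ 2 := by
    rw [show (4:ℕ) = 2*2 from rfl, pow_mul, Complex.sq_norm,
      Complex.normSq_apply]; ring
  rw [hgim, hm4, h1, h2]
  have hn' : ‖w t‖ ≠ 0 := hn
  generalize ‖w t‖ = n at hn' ⊢
  generalize Z.re = X at hZsq ⊢
  generalize Z.im = Y at hZsq ⊢
  field_simp
  ring


/-- For the forward chordal Loewner flow `g` (with derivative `a/(g(t) - V(t))`) and the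
spatial derivative process `w` (with `w(0) = 1` and derivative `-a·w(t)/(g(t) - V(t))²`),
the conformal radius process `Υ_t = Im g(t) / ‖w(t)‖` is differentiable with
`∂_t Υ_t = -Υ_t · 2a Y_t² / ‖Z_t‖⁴`, where `Z_t = g(t) - V(t)` and `Y_t = Im Z_t`;
in particular `t ↦ Υ_t` is nonincreasing on `[0,T]`. -/
theorem loewner_conformal_radius_deriv
    (a : ℝ) (ha : 0 < a) (V : ℝ → ℝ) (hV : Continuous V)
    (z : ℂ) (hz : 0 < z.im) (T : ℝ) (hT : 0 < T)
    (g w : ℝ → ℂ)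
    (hg0 : g 0 = z)
    (hg : ∀ t ∈ Set.Icc 0 T, g t ≠ (V t : ℂ) ∧ 0 < (g t).im ∧
      HasDerivWithinAt g ((a : ℂ) / (g t - (V t : ℂ))) (Set.Icc 0 T) t)
    (hw0 : w 0 = 1)
    (hw : ∀ t ∈ Set.Icc 0 T, w t ≠ 0 ∧
      HasDerivWithinAt w (-(a : ℂ) * w t / (g t - (V t : ℂ)) ^ 2) (Set.Icc 0 T) t) :
    (∀ t ∈ Set.Icc 0 T,
      HasDerivWithinAt (fun s => (g s).im / ‖w s‖)
        (-((g t).im / ‖w t‖) *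
          (2 * a * ((g t - (V t : ℂ)).im) ^ 2 / ‖g t - (V t : ℂ)‖ ^ 4))
        (Set.Icc 0 T) t) ∧
    AntitoneOn (fun t => (g t).im / ‖w t‖) (Set.Icc 0 T) := by
  have key : ∀ t ∈ Set.Icc 0 T,
      HasDerivWithinAt (fun s => (g s).im / ‖w s‖)
        (-((g t).im / ‖w t‖) *
          (2 * a * ((g t - (V t : ℂ)).im) ^ 2 / ‖g t - (V t : ℂ)‖ ^ 4))
        (Set.Icc 0 T) t := by
    intro t ht
    obtain ⟨hne, him, hgd⟩ := hg t ht
    obtain ⟨hwne, hwd⟩ := hw t ht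
    exact loewner_key a (Set.Icc 0 T) t g w (V t) (sub_ne_zero.mpr hne) hwne hgd hwd
  refine ⟨key, ?_⟩
  apply antitoneOn_of_deriv_nonpos (convex_Icc 0 T)
  · exact fun t ht => (key t ht).continuousWithinAt
  · intro t ht
    rw [interior_Icc] at ht
    exact ((key t (Set.mem_Icc_of_Ioo ht)).hasDerivAt
      (Icc_mem_nhds ht.1 ht.2)).differentiableAt.differentiableWithinAt
  · intro t ht
    rw [interior_Icc] at ht
    have ht' := Set.mem_Icc_of_Ioo ht
    have hd := (key t ht').hasDerivAt (Icc_mem_nhds ht.1 ht.2)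
    rw [hd.deriv]
    have h1 : 0 ≤ (g t).im / ‖w t‖ := by
      have := (hg t ht').2.1
      positivity
    have h2 : 0 ≤ 2 * a * ((g t - (V t : ℂ)).im) ^ 2 / ‖g t - (V t : ℂ)‖ ^ 4 := by
      positivity
    rw [neg_mul]
    exact neg_nonpos_of_nonneg (mul_nonneg h1 h2)
end

section
/- For every t ∈ [0,T], the function Y_s = Im h(s) is differentiable at t with derivative ∂_t Y_t = a·Y_t / ‖Z_t‖². In particular t ↦ Y_t is nondecreasing on [0,T], Y_t > 0 for all t, and Y_t² ≤ (Im z)² + 2at for all t ∈ [0,T]. -/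
open Set

private lemma im_real_div (a : ℝ) (w : ℂ) : ((a:ℂ)/w).im = a * (-w).im / ‖w‖^2 := by
  rw [Complex.div_im, Complex.sq_norm]
  simp
  ring

/-- For the reverse Loewner flow `h` (with `h(0) = z ∈ ℍ` and derivative `a/(U(t) - h(t))`),
the imaginary part `Y_t = Im h(t)` is differentiable with `∂_t Y_t = a·Y_t/‖Z_t‖²` where
`Z_t = h(t) - U(t)`; in particular `Y` is nondecreasing, positive, and
`Y_t² ≤ (Im z)² + 2at` on `[0,T]`. -/
theorem reverse_loewner_im_deriv
    (a : ℝ) (ha : 0 < a) (U : ℝ → ℝ) (hU : Continuous U)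
    (z : ℂ) (hz : 0 < z.im) (T : ℝ) (hT : 0 < T)
    (h : ℝ → ℂ) (hh0 : h 0 = z)
    (hh : ∀ t ∈ Set.Icc 0 T, h t ≠ (U t : ℂ) ∧
      HasDerivWithinAt h ((a : ℂ) / ((U t : ℂ) - h t)) (Set.Icc 0 T) t) :
    (∀ t ∈ Set.Icc 0 T,
      HasDerivWithinAt (fun s => (h s).im)
        (a * (h t - (U t : ℂ)).im / ‖h t - (U t : ℂ)‖ ^ 2) (Set.Icc 0 T) t) ∧
    MonotoneOn (fun s => (h s).im) (Set.Icc 0 T) ∧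
    (∀ t ∈ Set.Icc 0 T, 0 < (h t).im) ∧
    (∀ t ∈ Set.Icc 0 T, (h t).im ^ 2 ≤ z.im ^ 2 + 2 * a * t) := by
  set Y : ℝ → ℝ := fun s => (h s).im with hY
  set D : ℝ → ℝ := fun t => a * (h t - (U t : ℂ)).im / ‖h t - (U t : ℂ)‖ ^ 2 with hD
  -- derivative
  have hder : ∀ t ∈ Set.Icc 0 T, HasDerivWithinAt Y (D t) (Set.Icc 0 T) t := by
    intro t ht
    obtain ⟨hne, hd⟩ := hh t ht
    have h1 : HasDerivWithinAt (fun s => (h s).im)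
        (((a:ℂ)/((U t : ℂ) - h t)).im) (Set.Icc 0 T) t :=
      Complex.imCLM.hasFDerivAt.comp_hasDerivWithinAt t hd
    convert h1 using 1
    rw [im_real_div, neg_sub]
    rw [show ‖(U t : ℂ) - h t‖ = ‖h t - (U t : ℂ)‖ from norm_sub_rev _ _]
  -- continuity of Y on Icc
  have hYcont : ContinuousOn Y (Set.Icc 0 T) := fun t ht =>
    (hder t ht).continuousWithinAt
  -- Z ≠ 0
  have hZne : ∀ t ∈ Set.Icc 0 T, h t - (U t : ℂ) ≠ 0 := fun t ht =>
    sub_ne_zero.mpr (hh t ht).1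
  -- deriv at interior points
  have hderAt : ∀ x ∈ Set.Ioo 0 T, HasDerivAt Y (D x) x := by
    intro x hx
    exact (hder x (Ioo_subset_Icc_self hx)).hasDerivAt (Icc_mem_nhds hx.1 hx.2)
  -- positivity
  have hY0 : Y 0 = z.im := by simp [hY, hh0]
  have hpos : ∀ t ∈ Set.Icc 0 T, 0 < Y t := by
    by_contra hcon
    push_neg at hcon
    obtain ⟨t1, ht1, ht1le⟩ := hcon
    set A : Set ℝ := {t ∈ Set.Icc 0 T | Y t ≤ 0} with hA
    have hAne : A.Nonempty := ⟨t1, ht1, ht1le⟩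
    have hAclosed : IsClosed A := by
      have : A = Set.Icc 0 T ∩ Y ⁻¹' (Set.Iic 0) := rfl
      rw [this]
      exact ContinuousOn.preimage_isClosed_of_isClosed hYcont isClosed_Icc isClosed_Iic
    have hAbdd : BddBelow A := ⟨0, fun x hx => hx.1.1⟩
    set t0 := sInf A with ht0def
    have ht0A : t0 ∈ A := hAclosed.csInf_mem hAne hAbdd
    have ht0Icc : t0 ∈ Set.Icc 0 T := ht0A.1
    have ht0Y : Y t0 ≤ 0 := ht0A.2
    have ht0pos : 0 < t0 := by
      rcases lt_or_eq_of_le ht0Icc.1 with h' | h'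
      · exact h'
      · exfalso; rw [← h', hY0] at ht0Y; linarith
    have hbefore : ∀ s ∈ Set.Ico (0:ℝ) t0, 0 < Y s := by
      intro s hs
      by_contra hs'
      push_neg at hs'
      have : s ∈ A := ⟨⟨hs.1, le_trans hs.2.le ht0Icc.2⟩, hs'⟩
      exact absurd (csInf_le hAbdd this) (not_le.mpr hs.2)
    have hmono : StrictMonoOn Y (Set.Icc 0 t0) := by
      apply strictMonoOn_of_deriv_pos (convex_Icc 0 t0)
      · exact hYcont.mono (Icc_subset_Icc le_rfl ht0Icc.2)
      · intro x hx
        rw [interior_Icc] at hx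
        have hxT : x ∈ Set.Ioo 0 T := ⟨hx.1, lt_of_lt_of_le hx.2 ht0Icc.2⟩
        rw [(hderAt x hxT).deriv]
        have hx' : x ∈ Set.Icc 0 T := Ioo_subset_Icc_self hxT
        have hYx : 0 < Y x := hbefore x ⟨hx.1.le, hx.2⟩
        have hnorm : 0 < ‖h x - (U x : ℂ)‖ ^ 2 :=
          pow_pos (norm_pos_iff.mpr (hZne x hx')) 2
        have him : (h x - (U x : ℂ)).im = Y x := by simp [hY]
        simp only [hD]; rw [him]
        exact div_pos (mul_pos ha hYx) hnorm
    have : Y 0 < Y t0 := hmono ⟨le_rfl, ht0pos.le⟩ ⟨ht0pos.le, le_rfl⟩ ht0pos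
    rw [hY0] at this
    linarith
  -- monotone
  have hmono : MonotoneOn Y (Set.Icc 0 T) := by
    apply monotoneOn_of_deriv_nonneg (convex_Icc 0 T) hYcont
    · intro x hx
      rw [interior_Icc] at hx
      exact (hderAt x hx).differentiableAt.differentiableWithinAt
    · intro x hx
      rw [interior_Icc] at hx
      rw [(hderAt x hx).deriv]
      have hx' : x ∈ Set.Icc 0 T := Ioo_subset_Icc_self hx
      have hYx : 0 < Y x := hpos x hx'
      have hnorm : 0 < ‖h x - (U x : ℂ)‖ ^ 2 :=
        pow_pos (norm_pos_iff.mpr (hZne x hx')) 2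
      have him : (h x - (U x : ℂ)).im = Y x := by simp [hY]
      simp only [hD]; rw [him]
      positivity
  -- square bound
  have hbound : ∀ t ∈ Set.Icc 0 T, Y t ^ 2 ≤ z.im ^ 2 + 2 * a * t := by
    set g : ℝ → ℝ := fun t => Y t ^ 2 - 2 * a * t with hg
    have hganti : AntitoneOn g (Set.Icc 0 T) := by
      apply antitoneOn_of_deriv_nonpos (convex_Icc 0 T)
      · exact ((hYcont.pow 2).sub (continuousOn_const.mul continuousOn_id)).congr
          (fun x _ => rfl)
      · intro x hx
        rw [interior_Icc] at hx
        exact (((hderAt x hx).pow 2).sub ((hasDerivAt_id x).const_mul (2*a))).differentiableAt.differentiableWithinAt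
      · intro x hx
        rw [interior_Icc] at hx
        have hgx : HasDerivAt g (2 * Y x ^ 1 * D x - 2 * a * 1) x :=
          ((hderAt x hx).pow 2).sub ((hasDerivAt_id x).const_mul (2*a))
        rw [hgx.deriv]
        have hx' : x ∈ Set.Icc 0 T := Ioo_subset_Icc_self hx
        have hYx : 0 < Y x := hpos x hx'
        have him : (h x - (U x : ℂ)).im = Y x := by simp [hY]
        have hnormsq : ‖h x - (U x : ℂ)‖ ^ 2
            = (h x - (U x : ℂ)).re ^ 2 + Y x ^ 2 := by
          rw [Complex.sq_norm, Complex.normSq_apply, him]; ring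
        have hnormY : Y x ^ 2 ≤ ‖h x - (U x : ℂ)‖ ^ 2 := by nlinarith [sq_nonneg ((h x - (U x : ℂ)).re)]
        have hnorm : 0 < ‖h x - (U x : ℂ)‖ ^ 2 :=
          pow_pos (norm_pos_iff.mpr (hZne x hx')) 2
        have hYD : Y x * D x ≤ a := by
          simp only [hD]; rw [him]
          rw [mul_div_assoc', div_le_iff₀ hnorm]
          nlinarith
        simp only [pow_one]
        nlinarith
    intro t ht
    have := hganti (left_mem_Icc.mpr hT.le) ht ht.1
    simp only [hg] at this
    rw [hY0] at this
    linarith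
  exact ⟨hder, hmono, hpos, hbound⟩
end

section
/- For every t ∈ [0,T], the function s ↦ ‖w(s)‖ / Y_s is differentiable at t with derivative −(‖w(t)‖ / Y_t) · 2a·Y_t² / ‖Z_t‖⁴. In particular, t ↦ ‖w(t)‖ / Y_t is nonincreasing on [0,T], and hence ‖w(t)‖ ≤ Y_t / Im z for all t ∈ [0,T]. -/
open MeasureTheory intervalIntegral Set

lemma ftc_icc_aux {E : Type*} [NormedAddCommGroup E] [NormedSpace ℝ E] [CompleteSpace E]
    {T : ℝ} {f : ℝ → E} (hf : ContinuousOn f (Set.Icc 0 T)) {t : ℝ} (ht : t ∈ Set.Icc 0 T) :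
    HasDerivWithinAt (fun u => ∫ s in (0:ℝ)..u, f s) (f t) (Set.Icc 0 T) t := by
  haveI : Fact (t ∈ Set.Icc (0:ℝ) T) := ⟨ht⟩
  refine intervalIntegral.integral_hasDerivWithinAt_right ?_ ?_ (hf t ht)
  · exact (hf.mono (by rw [Set.uIcc_of_le ht.1]; exact Set.Icc_subset_Icc_right ht.2)).intervalIntegrable
  · exact hf.stronglyMeasurableAtFilter_nhdsWithin measurableSet_Icc t

lemma const_icc_aux {E : Type*} [NormedAddCommGroup E] [NormedSpace ℝ E]
    {T : ℝ} {f : ℝ → E}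
    (hd : ∀ t ∈ Set.Icc 0 T, HasDerivWithinAt f 0 (Set.Icc 0 T) t) :
    ∀ t ∈ Set.Icc 0 T, f t = f 0 := by
  refine constant_of_has_deriv_right_zero (fun t ht => (hd t ht).continuousWithinAt) ?_
  intro x hx
  have h1 : HasDerivWithinAt f 0 (Set.Icc x T) x :=
    (hd x ⟨hx.1, hx.2.le⟩).mono (Set.Icc_subset_Icc_left hx.1)
  refine h1.mono_of_mem_nhdsWithin ?_
  rw [← Set.Ici_inter_Iic]
  exact Filter.inter_mem self_mem_nhdsWithin (nhdsWithin_le_nhds (Iic_mem_nhds hx.2))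

lemma im_div_aux (a : ℝ) (ζ : ℂ) (hζ : ζ ≠ 0) : ((a:ℂ)/ζ).im = a / ‖ζ‖^2 * (-ζ.im) := by
  have hn : Complex.normSq ζ ≠ 0 := (Complex.normSq_pos.2 hζ).ne'
  rw [Complex.div_im]
  simp only [Complex.sq_norm, Complex.ofReal_re, Complex.ofReal_im]
  field_simp
  ring

lemma m_val_aux (a : ℝ) (ζ : ℂ) (hζ : ζ ≠ 0) :
    ((a:ℂ)/ζ^2).re - a/‖ζ‖^2 = -(2*a*(ζ.im)^2/‖ζ‖^4) := by
  have hn' : ζ.re^2 + ζ.im^2 ≠ 0 := by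
    have := (Complex.normSq_pos.2 hζ).ne'
    rwa [Complex.normSq_apply, ← pow_two, ← pow_two] at this
  have h4 : ‖ζ‖^4 = (ζ.re^2 + ζ.im^2) ^ 2 := by
    rw [show (4:ℕ) = 2*2 from rfl, pow_mul, Complex.sq_norm,
      Complex.normSq_apply]; ring
  have h2 : ‖ζ‖^2 = ζ.re^2 + ζ.im^2 := by
    rw [Complex.sq_norm, Complex.normSq_apply]; ring
  rw [Complex.div_re, h4, h2]
  have h2re : (ζ^2).re = ζ.re^2 - ζ.im^2 := by rw [pow_two, Complex.mul_re]; ring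
  have h2im : (ζ^2).im = 2*ζ.re*ζ.im := by rw [pow_two, Complex.mul_im]; ring
  have hns : Complex.normSq (ζ^2) = (ζ.re^2 + ζ.im^2) ^ 2 := by
    rw [map_pow, Complex.normSq_apply]; ring
  rw [h2re, h2im, hns]
  simp only [Complex.ofReal_re, Complex.ofReal_im]
  field_simp
  ring

/-- For the reverse Loewner flow `h` and its spatial derivative process `w`
(`w(0) = 1`, `∂_t w = a·w/(U(t) - h(t))²`), the process `‖w(t)‖ / Y_t` (with
`Y_t = Im h(t)`) is differentiable with derivative
`-(‖w(t)‖/Y_t) · 2a Y_t² / ‖Z_t‖⁴`; in particular it is nonincreasing on `[0,T]`,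
whence `‖w(t)‖ ≤ Y_t / Im z`. -/
theorem reverse_loewner_deriv_ratio
    (a : ℝ) (ha : 0 < a) (U : ℝ → ℝ) (hU : Continuous U)
    (z : ℂ) (hz : 0 < z.im) (T : ℝ) (hT : 0 < T)
    (h w : ℝ → ℂ) (hh0 : h 0 = z) (hw0 : w 0 = 1)
    (hh : ∀ t ∈ Set.Icc 0 T, h t ≠ (U t : ℂ) ∧
      HasDerivWithinAt h ((a : ℂ) / ((U t : ℂ) - h t)) (Set.Icc 0 T) t)
    (hw : ∀ t ∈ Set.Icc 0 T,
      HasDerivWithinAt w ((a : ℂ) * w t / ((U t : ℂ) - h t) ^ 2) (Set.Icc 0 T) t) :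
    (∀ t ∈ Set.Icc 0 T,
      HasDerivWithinAt (fun s => ‖w s‖ / (h s).im)
        (-(‖w t‖ / (h t).im) *
          (2 * a * ((h t - (U t : ℂ)).im) ^ 2 / ‖h t - (U t : ℂ)‖ ^ 4))
        (Set.Icc 0 T) t) ∧
    AntitoneOn (fun s => ‖w s‖ / (h s).im) (Set.Icc 0 T) ∧
    (∀ t ∈ Set.Icc 0 T, ‖w t‖ ≤ (h t).im / z.im) := by
  have hne : ∀ t ∈ Set.Icc 0 T, ((U t : ℂ) - h t) ≠ 0 := fun t ht =>
    sub_ne_zero.2 (Ne.symm (hh t ht).1)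
  have hcont_h : ContinuousOn h (Set.Icc 0 T) := fun t ht => ((hh t ht).2).continuousWithinAt
  have hcont_ζ : ContinuousOn (fun s => (U s : ℂ) - h s) (Set.Icc 0 T) :=
    ((Complex.continuous_ofReal.comp hU).continuousOn).sub hcont_h
  have hcont_q : ContinuousOn (fun s => (a:ℂ) / ((U s : ℂ) - h s)^2) (Set.Icc 0 T) :=
    continuousOn_const.div (hcont_ζ.pow 2) (fun t ht => pow_ne_zero 2 (hne t ht))
  have hcont_ρ : ContinuousOn (fun s => a / ‖(U s : ℂ) - h s‖^2) (Set.Icc 0 T) :=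
    continuousOn_const.div ((hcont_ζ.norm).pow 2)
      (fun t ht => pow_ne_zero 2 (norm_ne_zero_iff.2 (hne t ht)))
  have hcont_qre : ContinuousOn (fun s => ((a:ℂ) / ((U s : ℂ) - h s)^2).re) (Set.Icc 0 T) :=
    Complex.continuous_re.comp_continuousOn hcont_q
  have hcont_m : ContinuousOn
      (fun s => ((a:ℂ) / ((U s : ℂ) - h s)^2).re - a / ‖(U s : ℂ) - h s‖^2) (Set.Icc 0 T) :=
    hcont_qre.sub hcont_ρ
  -- Y = z.im * exp(Rρ)
  have hYd : ∀ t ∈ Set.Icc 0 T, HasDerivWithinAt (fun s => (h s).im)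
      ((a / ‖(U t : ℂ) - h t‖^2) * (h t).im) (Set.Icc 0 T) t := by
    intro t ht
    have h1 := Complex.imCLM.hasFDerivAt.comp_hasDerivWithinAt t (hh t ht).2
    have h2 : ((a:ℂ) / ((U t : ℂ) - h t)).im = (a / ‖(U t : ℂ) - h t‖^2) * (h t).im := by
      rw [im_div_aux a _ (hne t ht)]
      simp
    rw [← h2]
    exact h1
  have hρd : ∀ t ∈ Set.Icc 0 T, HasDerivWithinAt
      (fun u => ∫ s in (0:ℝ)..u, a / ‖(U s : ℂ) - h s‖^2)
      (a / ‖(U t : ℂ) - h t‖^2) (Set.Icc 0 T) t := fun t ht => ftc_icc_aux hcont_ρ ht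
  have hgY : ∀ t ∈ Set.Icc 0 T,
      (h t).im * Real.exp (-(∫ s in (0:ℝ)..t, a / ‖(U s : ℂ) - h s‖^2)) = z.im := by
    have hd : ∀ t ∈ Set.Icc 0 T, HasDerivWithinAt
        (fun s => (h s).im * Real.exp (-(∫ u in (0:ℝ)..s, a / ‖(U u : ℂ) - h u‖^2)))
        0 (Set.Icc 0 T) t := by
      intro t ht
      have := (hYd t ht).mul (((hρd t ht).neg).exp)
      exact this.congr_deriv (by ring)
    intro t ht
    have := const_icc_aux hd t ht
    rw [this]
    simp [hh0]
  have hYeq : ∀ t ∈ Set.Icc 0 T,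
      (h t).im = z.im * Real.exp (∫ s in (0:ℝ)..t, a / ‖(U s : ℂ) - h s‖^2) := by
    intro t ht
    have h1 := hgY t ht
    have h2 : Real.exp (-(∫ s in (0:ℝ)..t, a / ‖(U s : ℂ) - h s‖^2)) ≠ 0 := Real.exp_ne_zero _
    field_simp [Real.exp_neg] at h1 ⊢
    rw [Real.exp_neg, mul_inv_eq_iff_eq_mul₀ (Real.exp_ne_zero _)] at h1
    linarith [h1]
  have hYpos : ∀ t ∈ Set.Icc 0 T, 0 < (h t).im := by
    intro t ht
    rw [hYeq t ht]
    positivity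
  -- w = exp(Q)
  have hQd : ∀ t ∈ Set.Icc 0 T, HasDerivWithinAt
      (fun u => ∫ s in (0:ℝ)..u, (a:ℂ) / ((U s : ℂ) - h s)^2)
      ((a:ℂ) / ((U t : ℂ) - h t)^2) (Set.Icc 0 T) t := fun t ht => ftc_icc_aux hcont_q ht
  have hgw : ∀ t ∈ Set.Icc 0 T,
      w t * Complex.exp (-(∫ s in (0:ℝ)..t, (a:ℂ) / ((U s : ℂ) - h s)^2)) = 1 := by
    have hd : ∀ t ∈ Set.Icc 0 T, HasDerivWithinAt
        (fun s => w s * Complex.exp (-(∫ u in (0:ℝ)..s, (a:ℂ) / ((U u : ℂ) - h u)^2)))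
        0 (Set.Icc 0 T) t := by
      intro t ht
      have := (hw t ht).mul (((hQd t ht).neg).cexp)
      exact this.congr_deriv (by ring)
    intro t ht
    have := const_icc_aux hd t ht
    rw [this]
    simp [hw0]
  have hweq : ∀ t ∈ Set.Icc 0 T,
      w t = Complex.exp (∫ s in (0:ℝ)..t, (a:ℂ) / ((U s : ℂ) - h s)^2) := by
    intro t ht
    have h1 := hgw t ht
    rw [Complex.exp_neg] at h1
    field_simp at h1
    exact h1
  have hwnorm : ∀ t ∈ Set.Icc 0 T,
      ‖w t‖ = Real.exp (∫ s in (0:ℝ)..t, ((a:ℂ) / ((U s : ℂ) - h s)^2).re) := by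
    intro t ht
    rw [hweq t ht, Complex.norm_exp]
    congr 1
    have hint : IntervalIntegrable (fun s => (a:ℂ) / ((U s : ℂ) - h s)^2) volume 0 t :=
      (hcont_q.mono (by rw [Set.uIcc_of_le ht.1]; exact Set.Icc_subset_Icc_right ht.2)).intervalIntegrable
    have := Complex.reCLM.intervalIntegral_comp_comm hint
    simpa using this.symm
  -- F = (z.im)⁻¹ * exp(M)
  have hintm : ∀ t ∈ Set.Icc 0 T, (∫ s in (0:ℝ)..t,
      (((a:ℂ) / ((U s : ℂ) - h s)^2).re - a / ‖(U s : ℂ) - h s‖^2)) =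
      (∫ s in (0:ℝ)..t, ((a:ℂ) / ((U s : ℂ) - h s)^2).re)
        - (∫ s in (0:ℝ)..t, a / ‖(U s : ℂ) - h s‖^2) := by
    intro t ht
    have hsub : Set.uIcc (0:ℝ) t ⊆ Set.Icc 0 T := by
      rw [Set.uIcc_of_le ht.1]; exact Set.Icc_subset_Icc_right ht.2
    exact intervalIntegral.integral_sub ((hcont_qre.mono hsub).intervalIntegrable)
      ((hcont_ρ.mono hsub).intervalIntegrable)
  have hF : ∀ t ∈ Set.Icc 0 T, ‖w t‖ / (h t).im =
      (z.im)⁻¹ * Real.exp (∫ s in (0:ℝ)..t,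
        (((a:ℂ) / ((U s : ℂ) - h s)^2).re - a / ‖(U s : ℂ) - h s‖^2)) := by
    intro t ht
    rw [hwnorm t ht, hYeq t ht, hintm t ht, Real.exp_sub]
    have e1 := Real.exp_ne_zero (∫ s in (0:ℝ)..t, a / ‖(U s : ℂ) - h s‖^2)
    field_simp
  -- derivative
  have hDeriv : ∀ t ∈ Set.Icc 0 T,
      HasDerivWithinAt (fun s => ‖w s‖ / (h s).im)
        (-(‖w t‖ / (h t).im) *
          (2 * a * ((h t - (U t : ℂ)).im) ^ 2 / ‖h t - (U t : ℂ)‖ ^ 4))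
        (Set.Icc 0 T) t := by
    intro t ht
    have hMd := ftc_icc_aux hcont_m ht
    have hGd := (hMd.exp).const_mul (z.im)⁻¹
    have hval : -(‖w t‖ / (h t).im) *
        (2 * a * ((h t - (U t : ℂ)).im) ^ 2 / ‖h t - (U t : ℂ)‖ ^ 4)
        = (z.im)⁻¹ * (Real.exp (∫ s in (0:ℝ)..t,
            (((a:ℂ) / ((U s : ℂ) - h s)^2).re - a / ‖(U s : ℂ) - h s‖^2)) *
          (((a:ℂ) / ((U t : ℂ) - h t)^2).re - a / ‖(U t : ℂ) - h t‖^2)) := by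
      have hmv := m_val_aux a ((U t : ℂ) - h t) (hne t ht)
      have him : (h t - (U t : ℂ)).im = -(((U t : ℂ) - h t).im) := by simp
      have hnm : ‖h t - (U t : ℂ)‖ = ‖(U t : ℂ) - h t‖ := norm_sub_rev _ _
      rw [hF t ht, him, hnm, hmv]
      ring
    rw [hval]
    exact hGd.congr (fun s hs => hF s hs) (hF t ht)
  refine ⟨hDeriv, ?_, ?_⟩
  · -- antitone
    have hanti : AntitoneOn (fun s => ‖w s‖ / (h s).im) (Set.Icc 0 T) := by
      apply antitoneOn_of_deriv_nonpos (convex_Icc 0 T)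
      · exact fun t ht => (hDeriv t ht).continuousWithinAt
      · intro x hx
        rw [interior_Icc] at hx
        exact ((hDeriv x (Set.Ioo_subset_Icc_self hx)).hasDerivAt
          (Icc_mem_nhds hx.1 hx.2)).differentiableAt.differentiableWithinAt
      · intro x hx
        rw [interior_Icc] at hx
        have hx' := Set.Ioo_subset_Icc_self hx
        rw [((hDeriv x hx').hasDerivAt (Icc_mem_nhds hx.1 hx.2)).deriv]
        have h1 : 0 ≤ ‖w x‖ / (h x).im := div_nonneg (norm_nonneg _) (hYpos x hx').le
        have h2 : 0 ≤ 2 * a * ((h x - (U x : ℂ)).im) ^ 2 / ‖h x - (U x : ℂ)‖ ^ 4 := by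
          positivity
        rw [neg_mul]
        exact neg_nonpos.2 (mul_nonneg h1 h2)
    exact hanti
  · -- bound
    intro t ht
    have hanti : AntitoneOn (fun s => ‖w s‖ / (h s).im) (Set.Icc 0 T) := by
      apply antitoneOn_of_deriv_nonpos (convex_Icc 0 T)
      · exact fun t ht => (hDeriv t ht).continuousWithinAt
      · intro x hx
        rw [interior_Icc] at hx
        exact ((hDeriv x (Set.Ioo_subset_Icc_self hx)).hasDerivAt
          (Icc_mem_nhds hx.1 hx.2)).differentiableAt.differentiableWithinAt
      · intro x hx
        rw [interior_Icc] at hx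
        have hx' := Set.Ioo_subset_Icc_self hx
        rw [((hDeriv x hx').hasDerivAt (Icc_mem_nhds hx.1 hx.2)).deriv]
        have h1 : 0 ≤ ‖w x‖ / (h x).im := div_nonneg (norm_nonneg _) (hYpos x hx').le
        have h2 : 0 ≤ 2 * a * ((h x - (U x : ℂ)).im) ^ 2 / ‖h x - (U x : ℂ)‖ ^ 4 := by
          positivity
        rw [neg_mul]
        exact neg_nonpos.2 (mul_nonneg h1 h2)
    have h0D : (0:ℝ) ∈ Set.Icc (0:ℝ) T := ⟨le_refl 0, hT.le⟩
    have hle := hanti h0D ht ht.1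
    simp only [hw0, hh0, norm_one] at hle
    have hY := hYpos t ht
    rw [div_le_div_iff₀ hY hz] at hle
    rw [le_div_iff₀ hz]
    linarith
end

section
/- Suppose moreover Im z = 1 (i.e. z = x + i for some real x). Then for every t ∈ [0,T], one has ‖w(t)‖ ≤ Y_t ≤ √(2at + 1). -/
open Set Complex

private lemma hdwa_im' {f : ℝ → ℂ} {f' : ℂ} {s : Set ℝ} {t : ℝ}
    (hf : HasDerivWithinAt f f' s t) :
    HasDerivWithinAt (fun x => (f x).im) f'.im s t :=
  Complex.imCLM.hasFDerivAt.comp_hasDerivWithinAt t hf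

private lemma hdwa_re' {f : ℝ → ℂ} {f' : ℂ} {s : Set ℝ} {t : ℝ}
    (hf : HasDerivWithinAt f f' s t) :
    HasDerivWithinAt (fun x => (f x).re) f'.re s t :=
  Complex.reCLM.hasFDerivAt.comp_hasDerivWithinAt t hf

private lemma comp_formula (a : ℝ) (ω D : ℂ) (hD : D ≠ 0) :
    ω.re * ((a:ℂ)*ω/D^2).re + ω.im * ((a:ℂ)*ω/D^2).im
      = a * Complex.normSq ω * (D.re^2 - D.im^2) / (Complex.normSq D)^2 := by
  have hq : Complex.normSq D ≠ 0 := by simpa using hD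
  simp [Complex.div_re, Complex.div_im, Complex.mul_re, Complex.mul_im,
    Complex.normSq_apply, pow_two]
  field_simp
  ring

/-- For the reverse Loewner flow started at `z = x + i` (i.e. `Im z = 1`), with spatial
derivative process `w`, one has `‖w(t)‖ ≤ Y_t ≤ √(2at + 1)` for all `t ∈ [0,T]`,
where `Y_t = Im h(t)`. -/
theorem reverse_loewner_deriv_bound
    (a : ℝ) (ha : 0 < a) (U : ℝ → ℝ) (hU : Continuous U)
    (z : ℂ) (hz : 0 < z.im) (hz1 : z.im = 1) (T : ℝ) (hT : 0 < T)
    (h w : ℝ → ℂ) (hh0 : h 0 = z) (hw0 : w 0 = 1)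
    (hh : ∀ t ∈ Set.Icc 0 T, h t ≠ (U t : ℂ) ∧
      HasDerivWithinAt h ((a : ℂ) / ((U t : ℂ) - h t)) (Set.Icc 0 T) t)
    (hw : ∀ t ∈ Set.Icc 0 T,
      HasDerivWithinAt w ((a : ℂ) * w t / ((U t : ℂ) - h t) ^ 2) (Set.Icc 0 T) t) :
    ∀ t ∈ Set.Icc 0 T, ‖w t‖ ≤ (h t).im ∧ (h t).im ≤ Real.sqrt (2 * a * t + 1) := by
  set Y : ℝ → ℝ := fun s => (h s).im with hYdef
  set q : ℝ → ℝ := fun s => Complex.normSq ((U s : ℂ) - h s) with hqdef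
  set N : ℝ → ℝ := fun s => Complex.normSq (w s) with hNdef
  have hY0 : Y 0 = 1 := by simp [hYdef, hh0, hz1]
  have hqpos : ∀ t ∈ Set.Icc (0:ℝ) T, 0 < q t := by
    intro t ht
    exact Complex.normSq_pos.2 (sub_ne_zero.2 fun hc => (hh t ht).1 hc.symm)
  -- derivative of Y
  have hYd : ∀ t ∈ Set.Icc (0:ℝ) T,
      HasDerivWithinAt Y (a * Y t / q t) (Set.Icc 0 T) t := by
    intro t ht
    have hval : ((a:ℂ) / ((U t:ℂ) - h t)).im = a * Y t / q t := by
      simp [Complex.div_im, hqdef, hYdef]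
      ring
    exact hval ▸ hdwa_im' (hh t ht).2
  -- continuity
  have hYc : ContinuousOn Y (Set.Icc 0 T) := fun t ht =>
    Complex.continuous_im.continuousAt.comp_continuousWithinAt
      (hh t ht).2.continuousWithinAt
  have hNc : ContinuousOn N (Set.Icc 0 T) := fun t ht =>
    Complex.continuous_normSq.continuousAt.comp_continuousWithinAt
      (hw t ht).continuousWithinAt
  -- positivity of Y
  have hYpos : ∀ t ∈ Set.Icc (0:ℝ) T, 0 < Y t := by
    by_contra hcon
    push_neg at hcon
    obtain ⟨t₀, ht₀, hle⟩ := hcon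
    set S : Set ℝ := {s | s ∈ Set.Icc (0:ℝ) T ∧ Y s = 0} with hS
    have hSbdd : BddBelow S := ⟨0, fun s hs => hs.1.1⟩
    have hSne : S.Nonempty := by
      have hsub : Set.Icc (0:ℝ) t₀ ⊆ Set.Icc 0 T := Icc_subset_Icc le_rfl ht₀.2
      have h0mem : (0:ℝ) ∈ Set.Icc (Y t₀) (Y 0) := ⟨hle, by rw [hY0]; norm_num⟩
      obtain ⟨c, hc, hc0⟩ := intermediate_value_Icc' ht₀.1 (hYc.mono hsub) h0mem
      exact ⟨c, hsub hc, hc0⟩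
    have hSclosed : IsClosed S := by
      have hSeq : S = Set.Icc 0 T ∩ Y ⁻¹' {0} := rfl
      rw [hSeq]
      exact hYc.preimage_isClosed_of_isClosed isClosed_Icc isClosed_singleton
    set c := sInf S with hcdef
    have hcS : c ∈ S := hSclosed.csInf_mem hSne hSbdd
    have hcT : c ≤ T := hcS.1.2
    have hc0 : 0 < c := by
      rcases eq_or_lt_of_le hcS.1.1 with h' | h'
      · exfalso
        have hYc0 := hcS.2
        rw [← h', hY0] at hYc0
        exact one_ne_zero hYc0
      · exact h'
    -- Y positive on [0, c)
    have hYpos' : ∀ s ∈ Set.Ico (0:ℝ) c, 0 < Y s := by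
      intro s hs
      have hsT : s ≤ T := le_trans hs.2.le hcT
      rcases lt_trichotomy (Y s) 0 with hneg | h0 | hpos
      · exfalso
        have hsub : Set.Icc (0:ℝ) s ⊆ Set.Icc 0 T := Icc_subset_Icc le_rfl hsT
        have h0mem : (0:ℝ) ∈ Set.Icc (Y s) (Y 0) := ⟨hneg.le, by rw [hY0]; norm_num⟩
        obtain ⟨e, he, he0⟩ := intermediate_value_Icc' hs.1 (hYc.mono hsub) h0mem
        have : c ≤ e := csInf_le hSbdd ⟨hsub he, he0⟩
        have : c ≤ s := this.trans he.2
        exact absurd hs.2 (not_lt.2 this)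
      · exfalso
        have : c ≤ s := csInf_le hSbdd ⟨⟨hs.1, hsT⟩, h0⟩
        exact absurd hs.2 (not_lt.2 this)
      · exact hpos
    -- Y monotone on [0, c]
    have hmono : MonotoneOn Y (Set.Icc 0 c) := by
      apply monotoneOn_of_hasDerivWithinAt_nonneg (convex_Icc 0 c)
        (hYc.mono (Icc_subset_Icc le_rfl hcT)) (f' := fun x => a * Y x / q x)
      · intro x hx
        rw [interior_Icc] at hx
        have hxI : x ∈ Set.Icc 0 T := ⟨hx.1.le, le_trans hx.2.le hcT⟩
        refine (hYd x hxI).mono ?_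
        rw [interior_Icc]
        exact fun y hy => ⟨hy.1.le, le_trans hy.2.le hcT⟩
      · intro x hx
        rw [interior_Icc] at hx
        have hxI : x ∈ Set.Icc 0 T := ⟨hx.1.le, le_trans hx.2.le hcT⟩
        have hYx := hYpos' x ⟨hx.1.le, hx.2⟩
        have hq0 := hqpos x hxI
        positivity
    have h01 : Y 0 ≤ Y c := hmono ⟨le_rfl, hc0.le⟩ ⟨hc0.le, le_rfl⟩ hc0.le
    rw [hY0, hcS.2] at h01
    linarith
  -- Upper bound: Y t ^ 2 ≤ 2at + 1
  have hY2le : ∀ t ∈ Set.Icc (0:ℝ) T, Y t * Y t ≤ 2 * a * t + 1 := by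
    have hanti : AntitoneOn (fun s => Y s * Y s - 2 * a * s) (Set.Icc 0 T) := by
      apply antitoneOn_of_hasDerivWithinAt_nonpos (convex_Icc 0 T)
        ((hYc.mul hYc).sub ((continuous_const.mul continuous_id).continuousOn))
        (f' := fun x => ((a * Y x / q x) * Y x + Y x * (a * Y x / q x)) - 2 * a)
      · intro x hx
        rw [interior_Icc] at hx
        have hxI : x ∈ Set.Icc 0 T := Ioo_subset_Icc_self hx
        have hY' := hYd x hxI
        have hlin : HasDerivWithinAt (fun s : ℝ => 2 * a * s) (2 * a) (Set.Icc 0 T) x := by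
          simpa using ((hasDerivAt_id x).const_mul (2 * a)).hasDerivWithinAt
        exact (((hY'.mul hY').sub hlin).mono interior_subset)
      · intro x hx
        rw [interior_Icc] at hx
        have hxI : x ∈ Set.Icc 0 T := Ioo_subset_Icc_self hx
        have hq0 := hqpos x hxI
        have hY2q : Y x * Y x ≤ q x := by
          have : ((U x:ℂ) - h x).im = -(Y x) := by simp [hYdef]
          rw [hqdef]
          simp only [Complex.normSq_apply, this]
          nlinarith [mul_self_nonneg ((U x:ℂ) - h x).re]
        have heq : (a * Y x / q x) * Y x + Y x * (a * Y x / q x) - 2 * a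
            = 2 * a * (Y x * Y x) / q x - 2 * a := by ring
        rw [heq, sub_nonpos, div_le_iff₀ hq0]
        nlinarith
    intro t ht
    have := hanti (Set.left_mem_Icc.2 (le_trans ht.1 ht.2)) ht ht.1
    simp only [hY0] at this
    linarith
  -- Part 1: derivative of N
  have hNd : ∀ t ∈ Set.Icc (0:ℝ) T,
      HasDerivWithinAt N (2 * (a * N t * (((U t:ℂ) - h t).re^2 - ((U t:ℂ) - h t).im^2)
        / (q t)^2)) (Set.Icc 0 T) t := by
    intro t ht
    have hwre := hdwa_re' (hw t ht)
    have hwim := hdwa_im' (hw t ht)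
    have hD : (U t:ℂ) - h t ≠ 0 := sub_ne_zero.2 fun hc => (hh t ht).1 hc.symm
    have hsum := (hwre.mul hwre).add (hwim.mul hwim)
    have hgoal : HasDerivWithinAt (fun s => (w s).re * (w s).re + (w s).im * (w s).im)
        (2 * (a * N t * (((U t:ℂ) - h t).re^2 - ((U t:ℂ) - h t).im^2) / (q t)^2))
        (Set.Icc 0 T) t := by
      refine hsum.congr_deriv ?_
      have hcf := comp_formula a (w t) ((U t:ℂ) - h t) hD
      have hNt : N t = Complex.normSq (w t) := rfl
      have hqt : q t = Complex.normSq ((U t:ℂ) - h t) := rfl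
      rw [hNt, hqt, ← hcf]
      ring
    exact hgoal.congr (fun s _ => by simp [hNdef, Complex.normSq_apply])
      (by simp [hNdef, Complex.normSq_apply])
  -- the ratio N / Y² is antitone
  have hanti2 : AntitoneOn (fun s => N s / (Y s * Y s)) (Set.Icc 0 T) := by
    apply antitoneOn_of_hasDerivWithinAt_nonpos (convex_Icc 0 T)
      (hNc.div (hYc.mul hYc) (fun t ht => (mul_pos (hYpos t ht) (hYpos t ht)).ne'))
      (f' := fun x => ((2 * (a * N x * (((U x:ℂ) - h x).re^2 - ((U x:ℂ) - h x).im^2)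
          / (q x)^2)) * (Y x * Y x)
        - N x * ((a * Y x / q x) * Y x + Y x * (a * Y x / q x))) / (Y x * Y x)^2)
    · intro x hx
      rw [interior_Icc] at hx
      have hxI : x ∈ Set.Icc 0 T := Ioo_subset_Icc_self hx
      have hY' := hYd x hxI
      exact (((hNd x hxI).div (hY'.mul hY')
        (mul_pos (hYpos x hxI) (hYpos x hxI)).ne').mono interior_subset)
    · intro x hx
      rw [interior_Icc] at hx
      have hxI : x ∈ Set.Icc 0 T := Ioo_subset_Icc_self hx
      have hq0 : (0:ℝ) < q x := hqpos x hxI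
      apply div_nonpos_of_nonpos_of_nonneg _ (by positivity)
      set c' := ((U x:ℂ) - h x).re with hc'
      set d' := ((U x:ℂ) - h x).im with hd'
      have hqe : q x = c' * c' + d' * d' := Complex.normSq_apply _
      have hd : d' = -(Y x) := by simp [hd', hYdef]
      have heq : (2 * (a * N x * (c'^2 - d'^2) / (q x)^2)) * (Y x * Y x)
          - N x * ((a * Y x / q x) * Y x + Y x * (a * Y x / q x))
          = (2 * a * N x * (Y x * Y x)) * ((c'^2 - d'^2) - q x) / (q x)^2 := by
        field_simp
        ring
      rw [heq]
      apply div_nonpos_of_nonpos_of_nonneg _ (by positivity)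
      apply mul_nonpos_of_nonneg_of_nonpos
      · have hNx : (0:ℝ) ≤ N x := Complex.normSq_nonneg _
        have h2a : (0:ℝ) ≤ 2 * a := by positivity
        exact mul_nonneg (mul_nonneg h2a hNx) (mul_self_nonneg _)
      · rw [hqe, hd]; nlinarith [mul_self_nonneg c']
  -- conclude part 1
  intro t ht
  constructor
  · have hr : N t / (Y t * Y t) ≤ N 0 / (Y 0 * Y 0) :=
      hanti2 (Set.left_mem_Icc.2 (le_trans ht.1 ht.2)) ht ht.1
    have hr0 : N 0 / (Y 0 * Y 0) = 1 := by simp [hNdef, hw0, hY0]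
    rw [hr0] at hr
    have hYt := hYpos t ht
    have hNle : N t ≤ Y t * Y t := by
      rw [div_le_one (by positivity)] at hr
      exact hr
    have h1 : ‖w t‖ = Real.sqrt (N t) := by
      rw [hNdef]
      simp [Complex.norm_def]
    rw [h1]
    calc Real.sqrt (N t) ≤ Real.sqrt (Y t * Y t) := Real.sqrt_le_sqrt hNle
      _ = Y t := Real.sqrt_mul_self hYt.le
  · have hYt := hYpos t ht
    have h2 := hY2le t ht
    have hs := Real.sqrt_le_sqrt h2
    rw [Real.sqrt_mul_self hYt.le] at hs
    exact hs
end

section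
/- Assume the moment condition. Then there exists a constant C < ∞, depending only on c and β, such that for all m ≥ n, 𝔼[(Θ_{1,m} − Θ_{1,n})²] ≤ C · δ_n^{β/2}. -/
open MeasureTheory Filter

/-- Setup for the discrete Doob–Meyer approximation scheme: a submartingale
`(L_t)_{t ∈ [0,1]}` with `L 0 = 0` with respect to a filtration `F`, an increasing
sequence of partitions `Q n = {r n 0 < ⋯ < r n (k n)}` of `[0,1]` with meshes
`δ n → 0`, and the associated increasing processes `Θ n`, defined on the points of
`Q n` by `Θ n 0 = 0` and
`Θ n (r n (j+1)) = Θ n (r n j) + 𝔼[L (r n (j+1)) - L (r n j) | F (r n j)]`. -/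
structure DMSetup (Ω : Type) [m0 : MeasurableSpace Ω] (μ : Measure Ω) where
  F : Filtration ℝ m0
  L : ℝ → Ω → ℝ
  hLadapted : ∀ t ∈ Set.Icc (0 : ℝ) 1, StronglyMeasurable[F t] (L t)
  hLint : ∀ t ∈ Set.Icc (0 : ℝ) 1, Integrable (L t) μ
  hLsub : ∀ s t : ℝ, s ∈ Set.Icc (0 : ℝ) 1 → t ∈ Set.Icc (0 : ℝ) 1 → s ≤ t →
    L s ≤ᵐ[μ] μ[L t | F s]
  hL0 : L 0 = 0
  k : ℕ → ℕ
  hk : ∀ n, 0 < k n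
  r : ℕ → ℕ → ℝ
  hr0 : ∀ n, r n 0 = 0
  hr1 : ∀ n, r n (k n) = 1
  hrmono : ∀ n, StrictMonoOn (r n) (Set.Iic (k n))
  hincr : ∀ n, ∀ j ≤ k n, ∃ i ≤ k (n + 1), r (n + 1) i = r n j
  δ : ℕ → ℝ
  hδ : ∀ n, ∀ j < k n, r n (j + 1) - r n j ≤ δ n
  hδ0 : Tendsto δ atTop (nhds 0)
  Θ : ℕ → ℝ → Ω → ℝ
  hΘ0 : ∀ n, Θ n 0 = 0
  hΘrec : ∀ n, ∀ j < k n,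
    Θ n (r n (j + 1)) = Θ n (r n j) + μ[L (r n (j + 1)) - L (r n j) | F (r n j)]

/-- The moment condition: each `Θ n` is square-integrable at the partition points, and
`𝔼[(Θ_{t,n} - Θ_{s,n})²] ≤ c (t - s)^(β+1)` for all `s < t` in `Q n`. -/
def DMSetup.MomentCond {Ω : Type} [m0 : MeasurableSpace Ω] {μ : Measure Ω}
    (S : DMSetup Ω μ) (c β : ℝ) : Prop :=
  (∀ n, ∀ j ≤ S.k n, MemLp (S.Θ n (S.r n j)) 2 μ) ∧
  (∀ n, ∀ i j : ℕ, i ≤ j → j ≤ S.k n →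
    (∫ ω, (S.Θ n (S.r n j) ω - S.Θ n (S.r n i) ω) ^ 2 ∂μ) ≤
      c * (S.r n j - S.r n i) ^ (β + 1))

namespace DMSetup
variable {Ω : Type} [m0 : MeasurableSpace Ω] {μ : Measure Ω} (S : DMSetup Ω μ)

lemma r_le_r (n : ℕ) {i j : ℕ} (hij : i ≤ j) (hj : j ≤ S.k n) : S.r n i ≤ S.r n j :=
  (S.hrmono n).monotoneOn (Set.mem_Iic.mpr (hij.trans hj)) (Set.mem_Iic.mpr hj) hij

lemma r_lt_r (n : ℕ) {i j : ℕ} (hij : i < j) (hj : j ≤ S.k n) : S.r n i < S.r n j :=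
  (S.hrmono n) (Set.mem_Iic.mpr ((le_of_lt hij).trans hj)) (Set.mem_Iic.mpr hj) hij

lemma r_mem (n : ℕ) {j : ℕ} (hj : j ≤ S.k n) : S.r n j ∈ Set.Icc (0 : ℝ) 1 := by
  constructor
  · rw [← S.hr0 n]; exact S.r_le_r n (Nat.zero_le j) hj
  · rw [← S.hr1 n]; exact S.r_le_r n hj le_rfl

lemma exists_embed {n m : ℕ} (hnm : n ≤ m) : ∀ j ≤ S.k n, ∃ i ≤ S.k m, S.r m i = S.r n j := by
  induction m, hnm using Nat.le_induction with
  | base => exact fun j hj => ⟨j, hj, rfl⟩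
  | succ m hnm ih =>
      intro j hj
      obtain ⟨i, hi, hri⟩ := ih j hj
      obtain ⟨i', hi', hri'⟩ := S.hincr m i hi
      exact ⟨i', hi', by rw [hri', hri]⟩

lemma Θ_int (n : ℕ) : ∀ j ≤ S.k n, Integrable (S.Θ n (S.r n j)) μ := by
  intro j
  induction j with
  | zero => intro _; rw [S.hr0 n, S.hΘ0 n]; exact integrable_zero _ _ _
  | succ j ih =>
      intro hj
      rw [S.hΘrec n j hj]
      exact (ih (le_of_lt hj)).add integrable_condExp

lemma Θ_sm (n : ℕ) : ∀ j ≤ S.k n, StronglyMeasurable[S.F (S.r n j)] (S.Θ n (S.r n j)) := by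
  intro j
  induction j with
  | zero =>
      intro _; rw [S.hr0 n, S.hΘ0 n]
      exact stronglyMeasurable_zero
  | succ j ih =>
      intro hj
      rw [S.hΘrec n j hj]
      have hle : S.F (S.r n j) ≤ S.F (S.r n (j + 1)) :=
        S.F.mono (S.r_le_r n (Nat.le_succ j) hj)
      exact ((ih (le_of_lt hj)).mono hle).add (stronglyMeasurable_condExp.mono hle)

lemma condexp_Θ_diff [IsProbabilityMeasure μ] (n : ℕ) {i j : ℕ} (hij : i ≤ j) (hj : j ≤ S.k n) :
    μ[S.Θ n (S.r n j) - S.Θ n (S.r n i) | S.F (S.r n i)]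
      =ᵐ[μ] μ[S.L (S.r n j) - S.L (S.r n i) | S.F (S.r n i)] := by
  induction j, hij using Nat.le_induction with
  | base => simp
  | succ j hij ih =>
      have hjk : j < S.k n := hj
      have h1 : S.Θ n (S.r n (j + 1)) - S.Θ n (S.r n i)
          = (S.Θ n (S.r n j) - S.Θ n (S.r n i))
            + μ[S.L (S.r n (j + 1)) - S.L (S.r n j) | S.F (S.r n j)] := by
        rw [S.hΘrec n j hjk]; abel
      have hintA : Integrable (S.Θ n (S.r n j) - S.Θ n (S.r n i)) μ :=
        (S.Θ_int n j (le_of_lt hjk)).sub (S.Θ_int n i (hij.trans (le_of_lt hjk)))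
      have h2 : μ[S.Θ n (S.r n (j + 1)) - S.Θ n (S.r n i) | S.F (S.r n i)]
          =ᵐ[μ] μ[S.Θ n (S.r n j) - S.Θ n (S.r n i) | S.F (S.r n i)]
            + μ[μ[S.L (S.r n (j + 1)) - S.L (S.r n j) | S.F (S.r n j)] | S.F (S.r n i)] := by
        rw [h1]; exact condExp_add hintA integrable_condExp _
      have h3 : μ[μ[S.L (S.r n (j + 1)) - S.L (S.r n j) | S.F (S.r n j)] | S.F (S.r n i)]
          =ᵐ[μ] μ[S.L (S.r n (j + 1)) - S.L (S.r n j) | S.F (S.r n i)] :=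
        condExp_condExp_of_le (S.F.mono (S.r_le_r n hij (le_of_lt hjk))) (S.F.le _)
      have hLj1 : Integrable (S.L (S.r n (j + 1))) μ := S.hLint _ (S.r_mem n hj)
      have hLj : Integrable (S.L (S.r n j)) μ := S.hLint _ (S.r_mem n (le_of_lt hjk))
      have hLi : Integrable (S.L (S.r n i)) μ := S.hLint _ (S.r_mem n (hij.trans (le_of_lt hjk)))
      have h4 : μ[S.L (S.r n (j + 1)) - S.L (S.r n i) | S.F (S.r n i)]
          =ᵐ[μ] μ[S.L (S.r n j) - S.L (S.r n i) | S.F (S.r n i)]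
            + μ[S.L (S.r n (j + 1)) - S.L (S.r n j) | S.F (S.r n i)] := by
        have heq : S.L (S.r n (j + 1)) - S.L (S.r n i)
            = (S.L (S.r n j) - S.L (S.r n i)) + (S.L (S.r n (j + 1)) - S.L (S.r n j)) := by abel
        rw [heq]; exact condExp_add (hLj.sub hLi) (hLj1.sub hLj) _
      calc μ[S.Θ n (S.r n (j + 1)) - S.Θ n (S.r n i) | S.F (S.r n i)]
          =ᵐ[μ] _ + _ := h2
        _ =ᵐ[μ] μ[S.L (S.r n j) - S.L (S.r n i) | S.F (S.r n i)]
            + μ[S.L (S.r n (j + 1)) - S.L (S.r n j) | S.F (S.r n i)] :=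
              EventuallyEq.add (ih (le_of_lt hjk)) h3
        _ =ᵐ[μ] μ[S.L (S.r n (j + 1)) - S.L (S.r n i) | S.F (S.r n i)] := h4.symm

end DMSetup

lemma integrable_mul_of_memL2 {Ω : Type} [MeasurableSpace Ω] {μ : Measure Ω} {f g : Ω → ℝ}
    (hf : MemLp f 2 μ) (hg : MemLp g 2 μ) : Integrable (fun ω => f ω * g ω) μ := by
  have h := ((hf.add hg).integrable_sq.sub hf.integrable_sq).sub hg.integrable_sq
  have heq : (fun ω => f ω * g ω)
      = fun ω => ((f + g) ω ^ 2 - f ω ^ 2 - g ω ^ 2) / 2 := by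
    funext ω; simp only [Pi.add_apply]; ring
  rw [heq]
  exact h.div_const 2

lemma DMSetup.key {Ω : Type} [m0 : MeasurableSpace Ω] {μ : Measure Ω} [IsProbabilityMeasure μ]
    (S : DMSetup Ω μ) {c β : ℝ} (hmc : S.MomentCond c β) {n m : ℕ} (hnm : n ≤ m) :
    (∫ ω, (S.Θ m 1 ω - S.Θ n 1 ω) ^ 2 ∂μ)
      ≤ c * ∑ i ∈ Finset.range (S.k n), (S.r n (i + 1) - S.r n i) ^ (β + 1) := by
  obtain ⟨hmem, hbound⟩ := hmc
  -- embedding of partition points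
  have hex : ∀ j : ℕ, ∃ i, j ≤ S.k n → i ≤ S.k m ∧ S.r m i = S.r n j := by
    intro j
    by_cases h : j ≤ S.k n
    · obtain ⟨i, hi, hri⟩ := S.exists_embed hnm j h
      exact ⟨i, fun _ => ⟨hi, hri⟩⟩
    · exact ⟨0, fun hh => absurd hh h⟩
  choose φ hφ using hex
  set K := S.k n with hK
  -- the building blocks
  set Δ : ℕ → Ω → ℝ := fun i => S.Θ m (S.r n (i + 1)) - S.Θ m (S.r n i) with hΔ
  set P : ℕ → Ω → ℝ := fun i => S.Θ n (S.r n (i + 1)) - S.Θ n (S.r n i) with hP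
  set D : ℕ → Ω → ℝ := fun i => Δ i - P i with hD
  have hφk : ∀ i ≤ K, φ i ≤ S.k m := fun i hi => (hφ i hi).1
  have hφr : ∀ i ≤ K, S.r m (φ i) = S.r n i := fun i hi => (hφ i hi).2
  have hφlt : ∀ i < K, φ i < φ (i + 1) := by
    intro i hi
    by_contra h
    push_neg at h
    have h1 : S.r m (φ (i + 1)) ≤ S.r m (φ i) := S.r_le_r m h (hφk i (le_of_lt hi))
    rw [hφr (i + 1) hi, hφr i (le_of_lt hi)] at h1
    exact absurd (S.r_lt_r n (Nat.lt_succ_self i) hi) (not_lt.mpr h1)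
  have hG : ∀ i : ℕ, S.F (S.r n i) ≤ m0 := fun i => S.F.le _
  -- membership in L²
  have hΔmem : ∀ i < K, MemLp (Δ i) 2 μ := by
    intro i hi
    have h1 := hmem m (φ (i + 1)) (hφk (i + 1) hi)
    have h2 := hmem m (φ i) (hφk i (le_of_lt hi))
    rw [hφr (i + 1) hi] at h1
    rw [hφr i (le_of_lt hi)] at h2
    simpa only [hΔ] using h1.sub h2
  have hPmem : ∀ i < K, MemLp (P i) 2 μ := by
    intro i hi
    simpa only [hP] using (hmem n (i + 1) hi).sub (hmem n i (le_of_lt hi))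
  have hDmem : ∀ i < K, MemLp (D i) 2 μ := fun i hi =>
    by simpa only [hD] using (hΔmem i hi).sub (hPmem i hi)
  have hΔint : ∀ i < K, Integrable (Δ i) μ := fun i hi => (hΔmem i hi).integrable one_le_two
  have hPint : ∀ i < K, Integrable (P i) μ := fun i hi => (hPmem i hi).integrable one_le_two
  have hDint : ∀ i < K, Integrable (D i) μ := fun i hi => (hDmem i hi).integrable one_le_two
  -- P is the conditional expectation of the increment of L
  have hPdef : ∀ i < K, P i = μ[S.L (S.r n (i + 1)) - S.L (S.r n i) | S.F (S.r n i)] := by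
    intro i hi
    simp only [hP]
    rw [S.hΘrec n i hi, add_sub_cancel_left]
  have hcondΔ : ∀ i < K, μ[Δ i | S.F (S.r n i)] =ᵐ[μ] P i := by
    intro i hi
    have h := S.condexp_Θ_diff m (le_of_lt (hφlt i hi)) (hφk (i + 1) hi)
    rw [hφr (i + 1) hi, hφr i (le_of_lt hi)] at h
    rw [hPdef i hi]
    simpa only [hΔ] using h
  have hPsm : ∀ i < K, StronglyMeasurable[S.F (S.r n i)] (P i) := by
    intro i hi
    rw [hPdef i hi]
    exact stronglyMeasurable_condExp
  have hcondP : ∀ i < K, μ[P i | S.F (S.r n i)] = P i := fun i hi =>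
    condExp_of_stronglyMeasurable (hG i) (hPsm i hi) (hPint i hi)
  have hcondD : ∀ i < K, μ[D i | S.F (S.r n i)] =ᵐ[μ] 0 := by
    intro i hi
    have h1 : μ[D i | S.F (S.r n i)]
        =ᵐ[μ] μ[Δ i | S.F (S.r n i)] - μ[P i | S.F (S.r n i)] := by
      simp only [hD]
      exact condExp_sub (hΔint i hi) (hPint i hi) _
    refine h1.trans ?_
    rw [hcondP i hi]
    filter_upwards [hcondΔ i hi] with ω hω
    simp [hω]
  have hΔsm : ∀ i < K, StronglyMeasurable[S.F (S.r n (i + 1))] (Δ i) := by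
    intro i hi
    have h1 := S.Θ_sm m (φ (i + 1)) (hφk (i + 1) hi)
    have h2 := S.Θ_sm m (φ i) (hφk i (le_of_lt hi))
    rw [hφr (i + 1) hi] at h1
    rw [hφr i (le_of_lt hi)] at h2
    have hle : S.F (S.r n i) ≤ S.F (S.r n (i + 1)) :=
      S.F.mono (S.r_le_r n (Nat.le_succ i) hi)
    simpa only [hΔ] using h1.sub (h2.mono hle)
  have hDsm : ∀ i j, i < j → j ≤ K → StronglyMeasurable[S.F (S.r n j)] (D i) := by
    intro i j hij hj
    have hi1 : i + 1 ≤ j := hij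
    have hiK : i < K := lt_of_lt_of_le hij hj
    have hle1 : S.F (S.r n (i + 1)) ≤ S.F (S.r n j) := S.F.mono (S.r_le_r n hi1 hj)
    have hle2 : S.F (S.r n i) ≤ S.F (S.r n j) :=
      S.F.mono (S.r_le_r n (le_of_lt hij) hj)
    simpa only [hD] using ((hΔsm i hiK).mono hle1).sub ((hPsm i hiK).mono hle2)
  -- orthogonality of the increments
  have horth : ∀ i j, i < j → j < K → (∫ ω, D i ω * D j ω ∂μ) = 0 := by
    intro i j hij hj
    have hiK : i < K := lt_of_lt_of_le hij (le_of_lt hj)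
    have hint : Integrable (D i * D j) μ :=
      integrable_mul_of_memL2 (hDmem i hiK) (hDmem j hj)
    have h1 : μ[D i * D j | S.F (S.r n j)] =ᵐ[μ] D i * μ[D j | S.F (S.r n j)] :=
      condExp_mul_of_stronglyMeasurable_left (hDsm i j hij (le_of_lt hj)) hint (hDint j hj)
    have h0 : (∫ ω, (D i * D j) ω ∂μ) = ∫ ω, (μ[D i * D j | S.F (S.r n j)]) ω ∂μ :=
      (integral_condExp (hG j)).symm
    have h2 : (∫ ω, (μ[D i * D j | S.F (S.r n j)]) ω ∂μ) = 0 := by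
      refine integral_eq_zero_of_ae ?_
      filter_upwards [h1, hcondD j hj] with ω hω1 hω2
      rw [hω1]
      simp [hω2]
    simpa only [Pi.mul_apply] using h0.trans h2
  -- diagonal bound
  have hdiag : ∀ i < K,
      (∫ ω, D i ω * D i ω ∂μ) ≤ c * (S.r n (i + 1) - S.r n i) ^ (β + 1) := by
    intro i hi
    have hintPΔ : Integrable (P i * Δ i) μ :=
      integrable_mul_of_memL2 (hPmem i hi) (hΔmem i hi)
    have hintPP : Integrable (fun ω => P i ω * P i ω) μ :=
      integrable_mul_of_memL2 (hPmem i hi) (hPmem i hi)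
    have hintΔΔ : Integrable (fun ω => Δ i ω * Δ i ω) μ :=
      integrable_mul_of_memL2 (hΔmem i hi) (hΔmem i hi)
    have hmul : (∫ ω, P i ω * Δ i ω ∂μ) = ∫ ω, P i ω * P i ω ∂μ := by
      have h1 : μ[P i * Δ i | S.F (S.r n i)] =ᵐ[μ] P i * μ[Δ i | S.F (S.r n i)] :=
        condExp_mul_of_stronglyMeasurable_left (hPsm i hi) hintPΔ (hΔint i hi)
      have h0 : (∫ ω, (P i * Δ i) ω ∂μ) = ∫ ω, (μ[P i * Δ i | S.F (S.r n i)]) ω ∂μ :=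
        (integral_condExp (hG i)).symm
      have h2 : (∫ ω, (μ[P i * Δ i | S.F (S.r n i)]) ω ∂μ) = ∫ ω, P i ω * P i ω ∂μ := by
        refine integral_congr_ae ?_
        filter_upwards [h1, hcondΔ i hi] with ω hω1 hω2
        rw [hω1]
        simp [hω2]
      simpa only [Pi.mul_apply] using h0.trans h2
    have hintPΔ' : Integrable (fun ω => P i ω * Δ i ω) μ :=
      integrable_mul_of_memL2 (hPmem i hi) (hΔmem i hi)
    have hint2 : Integrable (fun ω => 2 * (P i ω * Δ i ω)) μ := hintPΔ'.const_mul 2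
    have hintA : Integrable (fun ω => Δ i ω * Δ i ω - 2 * (P i ω * Δ i ω)) μ :=
      hintΔΔ.sub hint2
    have h2 : (∫ ω, (Δ i ω * Δ i ω - 2 * (P i ω * Δ i ω)) + P i ω * P i ω ∂μ)
        = (∫ ω, Δ i ω * Δ i ω - 2 * (P i ω * Δ i ω) ∂μ) + ∫ ω, P i ω * P i ω ∂μ :=
      integral_add hintA hintPP
    have h3 : (∫ ω, Δ i ω * Δ i ω - 2 * (P i ω * Δ i ω) ∂μ)
        = (∫ ω, Δ i ω * Δ i ω ∂μ) - ∫ ω, 2 * (P i ω * Δ i ω) ∂μ :=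
      integral_sub hintΔΔ hint2
    have hval : (∫ ω, D i ω * D i ω ∂μ)
        = (∫ ω, Δ i ω * Δ i ω ∂μ) - (∫ ω, P i ω * P i ω ∂μ) := by
      have e1 : (∫ ω, D i ω * D i ω ∂μ)
          = ∫ ω, (Δ i ω * Δ i ω - 2 * (P i ω * Δ i ω)) + P i ω * P i ω ∂μ := by
        refine integral_congr_ae (Filter.Eventually.of_forall fun ω => ?_)
        show D i ω * D i ω = (Δ i ω * Δ i ω - 2 * (P i ω * Δ i ω)) + P i ω * P i ω
        simp only [hD, Pi.sub_apply]
        ring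
      rw [e1, h2, h3, integral_const_mul, hmul]
      ring
    have hPPnonneg : (0 : ℝ) ≤ ∫ ω, P i ω * P i ω ∂μ :=
      integral_nonneg fun ω => mul_self_nonneg _
    have hΔΔ : (∫ ω, Δ i ω * Δ i ω ∂μ) ≤ c * (S.r n (i + 1) - S.r n i) ^ (β + 1) := by
      have hb := hbound m (φ i) (φ (i + 1)) (le_of_lt (hφlt i hi)) (hφk (i + 1) hi)
      rw [hφr (i + 1) hi, hφr i (le_of_lt hi)] at hb
      refine le_trans (le_of_eq ?_) hb
      refine integral_congr_ae (Filter.Eventually.of_forall fun ω => ?_)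
      simp only [hΔ, Pi.sub_apply]
      ring
    linarith
  -- assembling
  have hsum : ∀ ω, S.Θ m 1 ω - S.Θ n 1 ω = ∑ i ∈ Finset.range K, D i ω := by
    intro ω
    simp only [hD, hΔ, hP, Pi.sub_apply]
    rw [Finset.sum_sub_distrib,
      Finset.sum_range_sub (fun i => S.Θ m (S.r n i) ω),
      Finset.sum_range_sub (fun i => S.Θ n (S.r n i) ω), hK, S.hr1 n, S.hr0 n,
      S.hΘ0 m, S.hΘ0 n]
    simp
  have hDDint : ∀ i j : ℕ, i < K → j < K → Integrable (fun ω => D i ω * D j ω) μ :=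
    fun i j hi hj => integrable_mul_of_memL2 (hDmem i hi) (hDmem j hj)
  calc (∫ ω, (S.Θ m 1 ω - S.Θ n 1 ω) ^ 2 ∂μ)
      = ∫ ω, ∑ i ∈ Finset.range K, ∑ j ∈ Finset.range K, D i ω * D j ω ∂μ := by
        refine integral_congr_ae (Filter.Eventually.of_forall fun ω => ?_)
        show (S.Θ m 1 ω - S.Θ n 1 ω) ^ 2
          = ∑ i ∈ Finset.range K, ∑ j ∈ Finset.range K, D i ω * D j ω
        rw [hsum ω, sq, Finset.sum_mul_sum]
    _ = ∑ i ∈ Finset.range K, ∑ j ∈ Finset.range K, ∫ ω, D i ω * D j ω ∂μ := by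
        rw [integral_finset_sum _ fun i hi =>
          integrable_finset_sum _ fun j hj =>
            hDDint i j (Finset.mem_range.mp hi) (Finset.mem_range.mp hj)]
        exact Finset.sum_congr rfl fun i hi =>
          integral_finset_sum _ fun j hj =>
            hDDint i j (Finset.mem_range.mp hi) (Finset.mem_range.mp hj)
    _ = ∑ i ∈ Finset.range K, ∫ ω, D i ω * D i ω ∂μ := by
        refine Finset.sum_congr rfl fun i hi => ?_
        refine Finset.sum_eq_single_of_mem i hi fun j hj hne => ?_
        rcases lt_or_gt_of_ne hne with hlt | hgt
        · have : (∫ ω, D j ω * D i ω ∂μ) = 0 :=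
            horth j i hlt (Finset.mem_range.mp hi)
          rw [← this]
          exact integral_congr_ae (Filter.Eventually.of_forall fun ω => mul_comm _ _)
        · exact horth i j hgt (Finset.mem_range.mp hj)
    _ ≤ ∑ i ∈ Finset.range K, c * (S.r n (i + 1) - S.r n i) ^ (β + 1) :=
        Finset.sum_le_sum fun i hi => hdiag i (Finset.mem_range.mp hi)
    _ = c * ∑ i ∈ Finset.range K, (S.r n (i + 1) - S.r n i) ^ (β + 1) :=
        (Finset.mul_sum _ _ _).symm

/-- Under the moment condition with constants `c, β`, there is a constant `C < ∞`,
depending only on `c` and `β`, such that for all `m ≥ n`,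
`𝔼[(Θ_{1,m} - Θ_{1,n})²] ≤ C δ_n^(β/2)`. -/
theorem dm_cauchy_bound (c β : ℝ) (hβ : 0 < β) :
    ∃ C : ℝ, ∀ (Ω : Type) (m0 : MeasurableSpace Ω) (μ : Measure Ω),
      IsProbabilityMeasure μ → ∀ S : DMSetup Ω μ, S.MomentCond c β →
      ∀ n m : ℕ, n ≤ m →
        (∫ ω, (S.Θ m 1 ω - S.Θ n 1 ω) ^ 2 ∂μ) ≤ C * S.δ n ^ (β / 2) := by
  refine ⟨c, ?_⟩
  intro Ω m0 μ hprob S hmc n m hnm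
  have hkey := S.key hmc hnm
  have hc : 0 ≤ c := by
    have h1 := hmc.2 n 0 (S.k n) (Nat.zero_le _) le_rfl
    rw [S.hr1 n, S.hr0 n, sub_zero, Real.one_rpow, mul_one] at h1
    exact le_trans (integral_nonneg fun ω => sq_nonneg _) h1
  have hδpos : 0 < S.δ n := by
    have h1 : S.r n 0 < S.r n 1 := S.r_lt_r n Nat.zero_lt_one (S.hk n)
    have h2 := S.hδ n 0 (S.hk n)
    rw [zero_add, S.hr0 n, sub_zero] at h2
    rw [S.hr0 n] at h1
    linarith
  set d := min (S.δ n) 1 with hd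
  have hd0 : 0 < d := lt_min hδpos one_pos
  have hd1 : d ≤ 1 := min_le_right _ _
  have hstep : ∀ i < S.k n,
      (S.r n (i + 1) - S.r n i) ^ (β + 1) ≤ d ^ β * (S.r n (i + 1) - S.r n i) := by
    intro i hi
    have hpos : 0 < S.r n (i + 1) - S.r n i :=
      sub_pos.mpr (S.r_lt_r n (Nat.lt_succ_self i) hi)
    have hle : S.r n (i + 1) - S.r n i ≤ d := by
      refine le_min (S.hδ n i hi) ?_
      have ha := (S.r_mem n (hi : i + 1 ≤ S.k n)).2
      have hb := (S.r_mem n (le_of_lt hi)).1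
      linarith
    calc (S.r n (i + 1) - S.r n i) ^ (β + 1)
        = (S.r n (i + 1) - S.r n i) ^ β * (S.r n (i + 1) - S.r n i) := by
          rw [Real.rpow_add hpos, Real.rpow_one]
      _ ≤ d ^ β * (S.r n (i + 1) - S.r n i) :=
          mul_le_mul_of_nonneg_right (Real.rpow_le_rpow hpos.le hle hβ.le) hpos.le
  have hsum2 : (∑ i ∈ Finset.range (S.k n), (S.r n (i + 1) - S.r n i) ^ (β + 1)) ≤ d ^ β := by
    calc (∑ i ∈ Finset.range (S.k n), (S.r n (i + 1) - S.r n i) ^ (β + 1))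
        ≤ ∑ i ∈ Finset.range (S.k n), d ^ β * (S.r n (i + 1) - S.r n i) :=
          Finset.sum_le_sum fun i hi => hstep i (Finset.mem_range.mp hi)
      _ = d ^ β * ∑ i ∈ Finset.range (S.k n), (S.r n (i + 1) - S.r n i) :=
          (Finset.mul_sum _ _ _).symm
      _ = d ^ β * (S.r n (S.k n) - S.r n 0) := by rw [Finset.sum_range_sub (S.r n)]
      _ = d ^ β := by rw [S.hr1 n, S.hr0 n]; ring
  have hdβ : d ^ β ≤ S.δ n ^ (β / 2) := by
    calc d ^ β ≤ d ^ (β / 2) :=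
          Real.rpow_le_rpow_of_exponent_ge hd0 hd1 (by linarith)
      _ ≤ S.δ n ^ (β / 2) :=
          Real.rpow_le_rpow hd0.le (min_le_left _ _) (by positivity)
  calc (∫ ω, (S.Θ m 1 ω - S.Θ n 1 ω) ^ 2 ∂μ)
      ≤ c * ∑ i ∈ Finset.range (S.k n), (S.r n (i + 1) - S.r n i) ^ (β + 1) := hkey
    _ ≤ c * (S.δ n ^ (β / 2)) := mul_le_mul_of_nonneg_left (hsum2.trans hdβ) hc
end

section
/- Assume the moment condition. Then for every t ∈ Q, the sequence (Θ_{t,n})_{n : t ∈ Q_n} converges in L²(ℙ) to a square-integrable random variable Θ_t, and these limits satisfy 𝔼[(Θ_t − Θ_s)²] ≤ c(t−s)^{β+1} for all s < t in Q. -/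
open MeasureTheory Filter

section Aux

variable {Ω : Type} [m0 : MeasurableSpace Ω] {μ : Measure Ω}

lemma dm_integrable_mul {u v : Ω → ℝ} (hu : MemLp u 2 μ) (hv : MemLp v 2 μ) :
    Integrable (fun ω => u ω * v ω) μ := by
  rw [← memLp_one_iff_integrable]
  have := hv.smul (r := 1) hu (hpqr := ⟨by rw [inv_one]; exact ENNReal.inv_two_add_inv_two⟩)
  simpa [Pi.smul_apply, smul_eq_mul, Pi.mul_def] using this

lemma dm_integral_sub_sq {u v : Ω → ℝ} (hu : MemLp u 2 μ) (hv : MemLp v 2 μ) :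
    ∫ ω, (u ω - v ω) ^ 2 ∂μ
      = ∫ ω, (u ω) ^ 2 ∂μ - 2 * ∫ ω, u ω * v ω ∂μ + ∫ ω, (v ω) ^ 2 ∂μ := by
  have hu2 := hu.integrable_sq
  have hv2 := hv.integrable_sq
  have huv := dm_integrable_mul hu hv
  have huv2 : Integrable (fun ω => 2 * (u ω * v ω)) μ := huv.const_mul 2
  have h1 : ∫ ω, (u ω - v ω) ^ 2 ∂μ
      = ∫ ω, ((u ω) ^ 2 - 2 * (u ω * v ω) + (v ω) ^ 2) ∂μ := by
    congr 1; funext ω; ring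
  have e1 : ∫ ω, (u ω ^ 2 - 2 * (u ω * v ω) + v ω ^ 2) ∂μ
      = (∫ ω, (u ω ^ 2 - 2 * (u ω * v ω)) ∂μ) + ∫ ω, (v ω) ^ 2 ∂μ :=
    integral_add (hu2.sub huv2) hv2
  have e2 : ∫ ω, (u ω ^ 2 - 2 * (u ω * v ω)) ∂μ
      = (∫ ω, (u ω) ^ 2 ∂μ) - ∫ ω, 2 * (u ω * v ω) ∂μ :=
    integral_sub hu2 huv2
  rw [h1, e1, e2, MeasureTheory.integral_const_mul]

lemma dm_integral_mul_condexp [IsProbabilityMeasure μ] {m' : MeasurableSpace Ω} (hm : m' ≤ m0)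
    {f g : Ω → ℝ} (hf : MemLp f 2 μ) (hfm : StronglyMeasurable[m'] f) (hg : MemLp g 2 μ) :
    ∫ ω, f ω * g ω ∂μ = ∫ ω, f ω * (μ[g|m']) ω ∂μ := by
  haveI : SigmaFinite (μ.trim hm) := inferInstance
  have hfg : Integrable (f * g) μ := dm_integrable_mul (m0 := m0) hf hg
  have h1 : ∫ ω, (μ[f * g|m']) ω ∂μ = ∫ ω, (f * g) ω ∂μ := integral_condExp hm
  have h2 : μ[f * g|m'] =ᵐ[μ] f * μ[g|m'] :=
    condExp_mul_of_stronglyMeasurable_left hfm hfg (hg.integrable one_le_two)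
  calc ∫ ω, f ω * g ω ∂μ = ∫ ω, (f * g) ω ∂μ := rfl
    _ = ∫ ω, (μ[f * g|m']) ω ∂μ := h1.symm
    _ = ∫ ω, (f * μ[g|m']) ω ∂μ := integral_congr_ae h2
    _ = ∫ ω, f ω * (μ[g|m']) ω ∂μ := rfl

lemma dm_integral_sq_eq_norm_toLp {f : Ω → ℝ} (hf : MemLp f 2 μ) :
    ∫ ω, (f ω) ^ 2 ∂μ = ‖hf.toLp f‖ ^ 2 := by
  rw [← real_inner_self_eq_norm_sq, L2.inner_def]
  refine (integral_congr_ae ?_).symm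
  filter_upwards [hf.coeFn_toLp] with ω hω
  rw [hω]
  simp [RCLike.inner_apply, sq]

lemma dm_integral_sub_sq_eq_dist {f g : Ω → ℝ} (hf : MemLp f 2 μ) (hg : MemLp g 2 μ) :
    ∫ ω, (f ω - g ω) ^ 2 ∂μ = dist (hf.toLp f) (hg.toLp g) ^ 2 := by
  have h : ∫ ω, (f ω - g ω) ^ 2 ∂μ = ‖(hf.sub hg).toLp (f - g)‖ ^ 2 :=
    dm_integral_sq_eq_norm_toLp (hf.sub hg)
  rw [dist_eq_norm, MemLp.toLp_sub hf hg] at *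
  exact h

end Aux

section Aux2

variable {Ω : Type} [m0 : MeasurableSpace Ω] {μ : Measure Ω} (S : DMSetup Ω μ)

lemma dm_r_mono {n a b : ℕ} (hab : a ≤ b) (hb : b ≤ S.k n) : S.r n a ≤ S.r n b :=
  (S.hrmono n).monotoneOn (Set.mem_Iic.mpr (hab.trans hb)) (Set.mem_Iic.mpr hb) hab

lemma dm_r_lt {n a b : ℕ} (hab : a < b) (hb : b ≤ S.k n) : S.r n a < S.r n b :=
  (S.hrmono n) (Set.mem_Iic.mpr ((hab.le).trans hb)) (Set.mem_Iic.mpr hb) hab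

lemma dm_r_mem_Icc {n j : ℕ} (hj : j ≤ S.k n) : S.r n j ∈ Set.Icc (0 : ℝ) 1 :=
  ⟨S.hr0 n ▸ dm_r_mono S (Nat.zero_le j) hj, S.hr1 n ▸ dm_r_mono S hj le_rfl⟩

lemma dm_embed {n m : ℕ} (hnm : n ≤ m) {j : ℕ} (hj : j ≤ S.k n) :
    ∃ i ≤ S.k m, S.r m i = S.r n j := by
  induction m, hnm using Nat.le_induction with
  | base => exact ⟨j, hj, rfl⟩
  | succ m hm ih =>
    obtain ⟨i, hi, hri⟩ := ih
    obtain ⟨i', hi', hri'⟩ := S.hincr m i hi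
    exact ⟨i', hi', hri'.trans hri⟩

lemma dm_theta_sm (n : ℕ) : ∀ j, j ≤ S.k n → StronglyMeasurable[S.F (S.r n j)] (S.Θ n (S.r n j)) := by
  intro j
  induction j with
  | zero =>
    intro _
    rw [S.hr0, S.hΘ0]
    exact stronglyMeasurable_const
  | succ j ih =>
    intro hj1
    have hj : j < S.k n := Nat.lt_of_succ_le hj1
    have hle : S.F (S.r n j) ≤ S.F (S.r n (j + 1)) :=
      S.F.mono (dm_r_mono S (Nat.le_succ j) hj1)
    rw [S.hΘrec n j hj]
    exact ((ih hj.le).mono hle).add (stronglyMeasurable_condExp.mono hle)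

lemma dm_tower [IsProbabilityMeasure μ]
    (h1 : ∀ n, ∀ j ≤ S.k n, MemLp (S.Θ n (S.r n j)) 2 μ)
    (m p q : ℕ) (hpq : p ≤ q) (hq : q ≤ S.k m) :
    μ[S.Θ m (S.r m q) - S.Θ m (S.r m p)|S.F (S.r m p)]
      =ᵐ[μ] μ[S.L (S.r m q) - S.L (S.r m p)|S.F (S.r m p)] := by
  induction q, hpq using Nat.le_induction with
  | base => simp
  | succ q hpq ih =>
    have hq' : q < S.k m := Nat.lt_of_succ_le hq
    have ihq := ih hq'.le
    have hfp : S.F (S.r m p) ≤ S.F (S.r m q) := S.F.mono (dm_r_mono S hpq hq'.le)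
    have intL : ∀ j, j ≤ S.k m → Integrable (S.L (S.r m j)) μ := fun j hj =>
      S.hLint _ (dm_r_mem_Icc S hj)
    have intΘ : ∀ j, j ≤ S.k m → Integrable (S.Θ m (S.r m j)) μ := fun j hj =>
      (h1 m j hj).integrable one_le_two
    have hrw : S.Θ m (S.r m (q + 1)) - S.Θ m (S.r m p)
        = (S.Θ m (S.r m q) - S.Θ m (S.r m p))
          + μ[S.L (S.r m (q + 1)) - S.L (S.r m q)|S.F (S.r m q)] := by
      rw [S.hΘrec m q hq']; abel
    rw [hrw]
    have hadd := condExp_add (m := S.F (S.r m p)) (μ := μ)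
      ((intΘ q hq'.le).sub (intΘ p (hpq.trans hq'.le)))
      (integrable_condExp (f := S.L (S.r m (q + 1)) - S.L (S.r m q)) (m := S.F (S.r m q)))
    refine hadd.trans ?_
    have htower : μ[μ[S.L (S.r m (q + 1)) - S.L (S.r m q)|S.F (S.r m q)]|S.F (S.r m p)]
        =ᵐ[μ] μ[S.L (S.r m (q + 1)) - S.L (S.r m q)|S.F (S.r m p)] :=
      condExp_condExp_of_le hfp (S.F.le _)
    refine (ihq.add htower).trans ?_
    have hsum := (condExp_add (m := S.F (S.r m p)) (μ := μ)
      ((intL q hq'.le).sub (intL p (hpq.trans hq'.le)))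
      ((intL (q + 1) hq).sub (intL q hq'.le))).symm
    refine hsum.trans ?_
    have : (S.L (S.r m q) - S.L (S.r m p)) + (S.L (S.r m (q + 1)) - S.L (S.r m q))
        = S.L (S.r m (q + 1)) - S.L (S.r m p) := by abel
    rw [this]

end Aux2

section Key

variable {Ω : Type} [m0 : MeasurableSpace Ω] {μ : Measure Ω} (S : DMSetup Ω μ)

lemma dm_c_nonneg [IsProbabilityMeasure μ] {c β : ℝ} (hβ : 0 < β) (hmom : S.MomentCond c β) :
    0 ≤ c := by
  have h := hmom.2 0 0 1 zero_le_one (S.hk 0)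
  have hpos : 0 < S.r 0 1 - S.r 0 0 := sub_pos.mpr (dm_r_lt S Nat.zero_lt_one (S.hk 0))
  have hI : (0 : ℝ) ≤ ∫ ω, (S.Θ 0 (S.r 0 1) ω - S.Θ 0 (S.r 0 0) ω) ^ 2 ∂μ :=
    integral_nonneg fun ω => sq_nonneg _
  have hrp : 0 < (S.r 0 1 - S.r 0 0) ^ (β + 1) := Real.rpow_pos_of_pos hpos _
  nlinarith

lemma dm_delta_nonneg (n : ℕ) : 0 ≤ S.δ n := by
  have h := S.hδ n 0 (S.hk n)
  have hpos : 0 < S.r n 1 - S.r n 0 := sub_pos.mpr (dm_r_lt S Nat.zero_lt_one (S.hk n))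
  have : S.r n (0 + 1) - S.r n 0 ≤ S.δ n := h
  simpa using hpos.le.trans (by simpa using h)

lemma dm_key [IsProbabilityMeasure μ] {c β : ℝ} (hβ : 0 < β) (hmom : S.MomentCond c β)
    (n m : ℕ) (hnm : n ≤ m) :
    ∀ J, J ≤ S.k n →
      ∫ ω, (S.Θ n (S.r n J) ω - S.Θ m (S.r n J) ω) ^ 2 ∂μ ≤ c * S.δ n ^ β * S.r n J := by
  have hc : 0 ≤ c := dm_c_nonneg S hβ hmom
  intro J
  induction J with
  | zero =>
    intro _
    rw [S.hr0 n]
    simp [S.hΘ0]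
  | succ J ih =>
    intro hJ1
    have hJ : J < S.k n := Nat.lt_of_succ_le hJ1
    obtain ⟨i, hik, hri⟩ := dm_embed S hnm hJ.le
    obtain ⟨i', hi'k, hri'⟩ := dm_embed S hnm hJ1
    have hst : S.r n J < S.r n (J + 1) := dm_r_lt S (Nat.lt_succ_self J) hJ1
    have hii' : i ≤ i' := by
      by_contra h
      push_neg at h
      have := dm_r_lt S h hik
      rw [hri, hri'] at this
      linarith
    -- abbreviations
    set s := S.r n J with hs
    set t := S.r n (J + 1) with ht
    set X : Ω → ℝ := fun ω => S.Θ n s ω - S.Θ m s ω with hX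
    set A : Ω → ℝ := fun ω => S.Θ m t ω - S.Θ m s ω with hA
    set G : Ω → ℝ := fun ω => S.Θ n t ω - S.Θ n s ω with hG
    have hGdef : G = μ[S.L t - S.L s|S.F s] := by
      funext ω
      rw [hG, S.hΘrec n J hJ]
      simp [hs, ht]
    -- square-integrability
    have hΘns : MemLp (S.Θ n s) 2 μ := hmom.1 n J hJ.le
    have hΘnt : MemLp (S.Θ n t) 2 μ := hmom.1 n (J + 1) hJ1
    have hΘms : MemLp (S.Θ m s) 2 μ := by have := hmom.1 m i hik; rwa [hri] at this
    have hΘmt : MemLp (S.Θ m t) 2 μ := by have := hmom.1 m i' hi'k; rwa [hri'] at this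
    have hXp : MemLp X 2 μ := hΘns.sub hΘms
    have hAp : MemLp A 2 μ := hΘmt.sub hΘms
    have hGp : MemLp G 2 μ := hΘnt.sub hΘns
    have hGAp : MemLp (fun ω => G ω - A ω) 2 μ := hGp.sub hAp
    -- measurability
    have hXm : StronglyMeasurable[S.F s] X := by
      have h1 := dm_theta_sm S n J hJ.le
      have h2 := dm_theta_sm S m i hik
      rw [hri] at h2
      exact h1.sub h2
    have hGm : StronglyMeasurable[S.F s] G := by rw [hGdef]; exact stronglyMeasurable_condExp
    -- tower: μ[A | F s] = G a.e.
    have htow : μ[A|S.F s] =ᵐ[μ] G := by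
      have h := dm_tower S hmom.1 m i i' hii' hi'k
      rw [hri, hri'] at h
      rw [hGdef]
      exact h
    -- the conditional expectation of G - A is zero
    have hcond0 : μ[fun ω => G ω - A ω|S.F s] =ᵐ[μ] 0 := by
      have hsub := condExp_sub (m := S.F s) (μ := μ)
        (hGp.integrable one_le_two) (hAp.integrable one_le_two)
      have hGfix : μ[G|S.F s] = G :=
        condExp_of_stronglyMeasurable (S.F.le s) hGm (hGp.integrable one_le_two)
      refine hsub.trans ?_
      rw [hGfix]
      filter_upwards [htow] with ω hω
      simp [hω]
    -- cross term vanishes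
    have hcross : ∫ ω, X ω * (G ω - A ω) ∂μ = 0 := by
      rw [dm_integral_mul_condexp (m0 := m0) (S.F.le s) hXp hXm hGAp]
      have : ∫ ω, X ω * (μ[fun ω => G ω - A ω|S.F s]) ω ∂μ = ∫ ω, X ω * 0 ∂μ := by
        refine integral_congr_ae ?_
        filter_upwards [hcond0] with ω hω
        rw [hω]
        simp
      simpa using this
    -- estimate on ∫ (G - A)²
    have hGA_sq : ∫ ω, (G ω - A ω) ^ 2 ∂μ ≤ c * (t - s) ^ (β + 1) := by
      have hexp := dm_integral_sub_sq hGp hAp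
      have hGG : ∫ ω, G ω * A ω ∂μ = ∫ ω, (G ω) ^ 2 ∂μ := by
        rw [dm_integral_mul_condexp (m0 := m0) (S.F.le s) hGp hGm hAp]
        refine integral_congr_ae ?_
        filter_upwards [htow] with ω hω
        rw [hω, sq]
      have hG2 : (0 : ℝ) ≤ ∫ ω, (G ω) ^ 2 ∂μ := integral_nonneg fun ω => sq_nonneg _
      have hAbound : ∫ ω, (A ω) ^ 2 ∂μ ≤ c * (t - s) ^ (β + 1) := by
        have h := hmom.2 m i i' hii' hi'k
        rw [hri, hri'] at h
        exact h
      rw [hexp, hGG]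
      linarith
    -- mesh estimate
    have hmesh : c * (t - s) ^ (β + 1) ≤ c * S.δ n ^ β * (t - s) := by
      have hΔpos : 0 < t - s := sub_pos.mpr hst
      have hΔδ : t - s ≤ S.δ n := S.hδ n J hJ
      have h1 : (t - s) ^ (β + 1) = (t - s) ^ β * (t - s) := by
        rw [Real.rpow_add_one hΔpos.ne' β]
      have h2 : (t - s) ^ β ≤ S.δ n ^ β :=
        Real.rpow_le_rpow hΔpos.le hΔδ hβ.le
      calc c * (t - s) ^ (β + 1) = c * ((t - s) ^ β * (t - s)) := by rw [h1]
        _ ≤ c * (S.δ n ^ β * (t - s)) := by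
            apply mul_le_mul_of_nonneg_left _ hc
            exact mul_le_mul_of_nonneg_right h2 hΔpos.le
        _ = c * S.δ n ^ β * (t - s) := by ring
    -- decomposition and final computation
    have hdecomp : ∫ ω, (S.Θ n t ω - S.Θ m t ω) ^ 2 ∂μ
        = ∫ ω, (X ω - (A ω - G ω)) ^ 2 ∂μ := by
      congr 1
      funext ω
      show (S.Θ n t ω - S.Θ m t ω) ^ 2 = ((S.Θ n s ω - S.Θ m s ω) - ((S.Θ m t ω - S.Θ m s ω) - (S.Θ n t ω - S.Θ n s ω))) ^ 2
      ring
    have hexp2 := dm_integral_sub_sq (u := X) (v := fun ω => A ω - G ω) hXp (hAp.sub hGp)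
    have hIX := ih hJ.le
    have hIXnn : (0 : ℝ) ≤ ∫ ω, (X ω) ^ 2 ∂μ := integral_nonneg fun ω => sq_nonneg _
    have hAG : ∫ ω, X ω * (A ω - G ω) ∂μ = 0 := by
      have : ∫ ω, X ω * (A ω - G ω) ∂μ = - ∫ ω, X ω * (G ω - A ω) ∂μ := by
        rw [← integral_neg]
        congr 1
        funext ω
        ring
      rw [this, hcross, neg_zero]
    have hAGsq : ∫ ω, (A ω - G ω) ^ 2 ∂μ = ∫ ω, (G ω - A ω) ^ 2 ∂μ := by
      congr 1
      funext ω
      ring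
    rw [hdecomp, hexp2, hAG, hAGsq]
    have : c * S.δ n ^ β * s + c * S.δ n ^ β * (t - s) = c * S.δ n ^ β * t := by ring
    linarith

end Key
/-- Under the moment condition, for each `t` in `Q = ⋃ n, Q n` the sequence `Θ_{t,n}`
converges in `L²(μ)` to a square-integrable limit `Θ_t`, and these limits satisfy
`𝔼[(Θ_t - Θ_s)²] ≤ c (t - s)^(β+1)` for all `s < t` in `Q`. -/
theorem dm_L2_limit
    {Ω : Type} [m0 : MeasurableSpace Ω] {μ : Measure Ω} [IsProbabilityMeasure μ]
    (S : DMSetup Ω μ) (c β : ℝ) (hβ : 0 < β) (hmom : S.MomentCond c β) :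
    ∃ ΘL : ℝ → Ω → ℝ,
      (∀ t : ℝ, (∃ n, ∃ j ≤ S.k n, S.r n j = t) →
        MemLp (ΘL t) 2 μ ∧
        Tendsto (fun n => ∫ ω, (S.Θ n t ω - ΘL t ω) ^ 2 ∂μ) atTop (nhds 0)) ∧
      (∀ s t : ℝ, (∃ n, ∃ j ≤ S.k n, S.r n j = s) → (∃ n, ∃ j ≤ S.k n, S.r n j = t) →
        s < t → (∫ ω, (ΘL t ω - ΘL s ω) ^ 2 ∂μ) ≤ c * (t - s) ^ (β + 1)) := by
  classical
  have hc : 0 ≤ c := dm_c_nonneg S hβ hmom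
  have hδnn : ∀ n, 0 ≤ S.δ n := dm_delta_nonneg S
  have hδβ : Tendsto (fun n => c * S.δ n ^ β) atTop (nhds 0) := by
    have h0 : ContinuousAt (fun x : ℝ => x ^ β) 0 :=
      Real.continuousAt_rpow_const 0 β (Or.inr hβ.le)
    have h := h0.tendsto.comp S.hδ0
    rw [Real.zero_rpow hβ.ne'] at h
    simpa using h.const_mul c
  have hmem : ∀ n (t : ℝ), (∃ j ≤ S.k n, S.r n j = t) → MemLp (S.Θ n t) 2 μ := by
    rintro n t ⟨j, hj, rfl⟩
    exact hmom.1 n j hj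
  let el : ℝ → ℕ → Lp ℝ 2 μ := fun t n =>
    if h : ∃ j ≤ S.k n, S.r n j = t then (hmem n t h).toLp _ else 0
  have hel : ∀ (t : ℝ) n (h : ∃ j ≤ S.k n, S.r n j = t),
      el t n = (hmem n t h).toLp (S.Θ n t) := by
    intro t n h
    simp only [el, dif_pos h]
  -- distance bound between approximations
  have hdist : ∀ (t : ℝ) n m, n ≤ m → (∃ j ≤ S.k n, S.r n j = t) →
      dist (el t n) (el t m) ^ 2 ≤ c * S.δ n ^ β := by
    intro t n m hnm h
    obtain ⟨j, hj, hrj⟩ := h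
    have hm : ∃ i ≤ S.k m, S.r m i = t := by
      obtain ⟨i, hi, hri⟩ := dm_embed S hnm hj
      exact ⟨i, hi, by rw [hri, hrj]⟩
    rw [hel t n ⟨j, hj, hrj⟩, hel t m hm,
      ← dm_integral_sub_sq_eq_dist (hmem n t ⟨j, hj, hrj⟩) (hmem m t hm)]
    have hkey := dm_key S hβ hmom n m hnm j hj
    rw [hrj] at hkey
    refine hkey.trans ?_
    have ht1 : t ≤ 1 := hrj ▸ (dm_r_mem_Icc S hj).2
    have hnn : 0 ≤ c * S.δ n ^ β := mul_nonneg hc (Real.rpow_nonneg (hδnn n) β)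
    exact mul_le_of_le_one_right hnn ht1
  -- existence of L² limits
  have hLT : ∀ t : ℝ, (∃ n, ∃ j ≤ S.k n, S.r n j = t) →
      ∃ LT : Lp ℝ 2 μ, Tendsto (fun n => el t n) atTop (nhds LT) := by
    intro t ht
    obtain ⟨n₀, j₀, hj₀, hr₀⟩ := ht
    have hQ : ∀ n, n₀ ≤ n → ∃ j ≤ S.k n, S.r n j = t := by
      intro n hn
      obtain ⟨i, hi, hri⟩ := dm_embed S hn hj₀
      exact ⟨i, hi, by rw [hri, hr₀]⟩
    apply cauchySeq_tendsto_of_complete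
    rw [Metric.cauchySeq_iff']
    intro ε hε
    have hev : ∀ᶠ N in atTop, c * S.δ N ^ β < ε ^ 2 :=
      hδβ.eventually_lt_const (by positivity)
    obtain ⟨N, hN1, hN2⟩ := ((eventually_ge_atTop n₀).and hev).exists
    refine ⟨N, fun n hn => ?_⟩
    have hb := hdist t N n hn (hQ N hN1)
    rw [dist_comm]
    exact lt_of_pow_lt_pow_left₀ 2 hε.le (lt_of_le_of_lt hb hN2)
  choose LT hLTspec using hLT
  refine ⟨fun t => if h : ∃ n, ∃ j ≤ S.k n, S.r n j = t then (LT t h : Ω → ℝ) else 0,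
    fun t ht => ?_, fun s t hs ht hst => ?_⟩
  · simp only [dif_pos ht]
    refine ⟨Lp.memLp _, ?_⟩
    obtain ⟨n₀, j₀, hj₀, hr₀⟩ := id ht
    have hQ : ∀ n, n₀ ≤ n → ∃ j ≤ S.k n, S.r n j = t := by
      intro n hn
      obtain ⟨i, hi, hri⟩ := dm_embed S hn hj₀
      exact ⟨i, hi, by rw [hri, hr₀]⟩
    have hconv := hLTspec t ht
    have hd : Tendsto (fun n => dist (el t n) (LT t ht) ^ 2) atTop (nhds 0) := by
      have h1 := tendsto_iff_dist_tendsto_zero.mp hconv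
      have h2 := h1.pow 2
      simpa using h2
    refine Tendsto.congr' ?_ hd
    filter_upwards [eventually_ge_atTop n₀] with n hn
    have h := hQ n hn
    have e1 : (Lp.memLp (LT t ht)).toLp (LT t ht) = LT t ht := Lp.toLp_coeFn _ (Lp.memLp _)
    calc dist (el t n) (LT t ht) ^ 2
        = dist ((hmem n t h).toLp (S.Θ n t)) ((Lp.memLp (LT t ht)).toLp (LT t ht)) ^ 2 := by
          rw [hel t n h, e1]
      _ = ∫ ω, (S.Θ n t ω - (LT t ht : Ω → ℝ) ω) ^ 2 ∂μ :=
          (dm_integral_sub_sq_eq_dist _ _).symm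
  · simp only [dif_pos hs, dif_pos ht]
    obtain ⟨ns, js, hjs, hrs⟩ := id hs
    obtain ⟨nt, jt, hjt, hrt⟩ := id ht
    set N := max ns nt with hN
    have hQs : ∀ m, N ≤ m → ∃ j ≤ S.k m, S.r m j = s := by
      intro m hm
      obtain ⟨i, hi, hri⟩ := dm_embed S ((le_max_left ns nt).trans hm) hjs
      exact ⟨i, hi, by rw [hri, hrs]⟩
    have hQt : ∀ m, N ≤ m → ∃ j ≤ S.k m, S.r m j = t := by
      intro m hm
      obtain ⟨i, hi, hri⟩ := dm_embed S ((le_max_right ns nt).trans hm) hjt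
      exact ⟨i, hi, by rw [hri, hrt]⟩
    have hlim : Tendsto (fun m => dist (el t m) (el s m) ^ 2) atTop
        (nhds (dist (LT t ht) (LT s hs) ^ 2)) :=
      ((hLTspec t ht).dist (hLTspec s hs)).pow 2
    have hbound : ∀ᶠ m in atTop, dist (el t m) (el s m) ^ 2 ≤ c * (t - s) ^ (β + 1) := by
      filter_upwards [eventually_ge_atTop N] with m hm
      obtain ⟨i, hi, hri⟩ := hQs m hm
      obtain ⟨i', hi', hri'⟩ := hQt m hm
      have hii' : i ≤ i' := by
        by_contra hcon
        push_neg at hcon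
        have := dm_r_lt S hcon hi
        rw [hri, hri'] at this
        linarith
      have h := hmom.2 m i i' hii' hi'
      rw [hri, hri'] at h
      rw [hel t m ⟨i', hi', hri'⟩, hel s m ⟨i, hi, hri⟩,
        ← dm_integral_sub_sq_eq_dist (hmem m t ⟨i', hi', hri'⟩) (hmem m s ⟨i, hi, hri⟩)]
      exact h
    have hfinal : dist (LT t ht) (LT s hs) ^ 2 ≤ c * (t - s) ^ (β + 1) :=
      le_of_tendsto hlim hbound
    have e1 : (Lp.memLp (LT t ht)).toLp (LT t ht) = LT t ht := Lp.toLp_coeFn _ (Lp.memLp _)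
    have e2 : (Lp.memLp (LT s hs)).toLp (LT s hs) = LT s hs := Lp.toLp_coeFn _ (Lp.memLp _)
    calc ∫ ω, ((LT t ht : Ω → ℝ) ω - (LT s hs : Ω → ℝ) ω) ^ 2 ∂μ
        = dist ((Lp.memLp (LT t ht)).toLp (LT t ht)) ((Lp.memLp (LT s hs)).toLp (LT s hs)) ^ 2 :=
          dm_integral_sub_sq_eq_dist _ _
      _ = dist (LT t ht) (LT s hs) ^ 2 := by rw [e1, e2]
      _ ≤ c * (t - s) ^ (β + 1) := hfinal
end

section
/- Let p, q, β be real numbers with 0 < p < q and β ≥ 0. Then there exists a constant c < ∞ such that for every integer m ≥ 1, Σ_{j=1}^{∞} e^{p j} · min(1, j^β · e^{q(m − j)}) ≤ c · m^β · e^{p m}. -/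
set_option maxHeartbeats 1000000


/-- For real `p, q, β` with `0 < p < q` and `β ≥ 0`, there is a constant `c < ∞` such
that for every integer `m ≥ 1`,
`∑_{j=1}^∞ e^(pj) min(1, j^β e^(q(m-j))) ≤ c m^β e^(pm)`. -/
theorem exp_sum_bound (p q β : ℝ) (hp : 0 < p) (hpq : p < q) (hβ : 0 ≤ β) :
    ∃ c : ℝ, ∀ m : ℕ, 1 ≤ m →
      (∑' j : ℕ, Real.exp (p * (j + 1)) *
          min 1 (((j : ℝ) + 1) ^ β * Real.exp (q * ((m : ℝ) - ((j : ℝ) + 1))))) ≤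
        c * (m : ℝ) ^ β * Real.exp (p * m) := by
  set r := q - p with hr_def
  have hr : 0 < r := sub_pos.2 hpq
  -- base summable sequence
  have hS : Summable (fun k : ℕ => ((k : ℝ) + 2) ^ β * Real.exp (-r * ((k : ℝ) + 1))) := by
    set N := ⌈β⌉₊ with hN
    have hgeom : ‖Real.exp (-r)‖ < 1 := by
      rw [Real.norm_eq_abs, abs_of_pos (Real.exp_pos _)]
      exact Real.exp_lt_one_iff.2 (by linarith)
    have h0 : Summable (fun n : ℕ => (n : ℝ) ^ N * Real.exp (-r) ^ n) :=
      summable_pow_mul_geometric_of_norm_lt_one N hgeom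
    have h1 : Summable (fun k : ℕ => ((k + 2 : ℕ) : ℝ) ^ N * Real.exp (-r) ^ (k + 2)) :=
      (summable_nat_add_iff 2).2 h0
    have h2 : Summable (fun k : ℕ => (Real.exp (-r))⁻¹ *
        (((k + 2 : ℕ) : ℝ) ^ N * Real.exp (-r) ^ (k + 2))) := h1.mul_left _
    apply h2.of_nonneg_of_le
    · intro k; positivity
    · intro k
      have hb : (1 : ℝ) ≤ (k : ℝ) + 2 := by
        have := Nat.cast_nonneg (α := ℝ) k
        linarith
      have hrp : ((k : ℝ) + 2) ^ β ≤ ((k : ℝ) + 2) ^ (N : ℝ) :=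
        Real.rpow_le_rpow_of_exponent_le hb (Nat.le_ceil β)
      rw [Real.rpow_natCast] at hrp
      have he : Real.exp (-r * ((k : ℝ) + 1)) =
          (Real.exp (-r))⁻¹ * Real.exp (-r) ^ (k + 2) := by
        rw [← Real.exp_nat_mul, ← Real.exp_neg, ← Real.exp_add]
        congr 1
        push_cast
        ring
      rw [he]
      have hpos : 0 ≤ (Real.exp (-r))⁻¹ * Real.exp (-r) ^ (k + 2) := by positivity
      calc ((k : ℝ) + 2) ^ β * ((Real.exp (-r))⁻¹ * Real.exp (-r) ^ (k + 2))
          ≤ ((k : ℝ) + 2) ^ N * ((Real.exp (-r))⁻¹ * Real.exp (-r) ^ (k + 2)) :=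
            mul_le_mul_of_nonneg_right hrp hpos
        _ = (Real.exp (-r))⁻¹ * (((k + 2 : ℕ) : ℝ) ^ N * Real.exp (-r) ^ (k + 2)) := by
            push_cast; ring
  set C := ∑' k : ℕ, ((k : ℝ) + 2) ^ β * Real.exp (-r * ((k : ℝ) + 1)) with hC
  refine ⟨(1 - Real.exp (-p))⁻¹ + C, ?_⟩
  intro m hm
  set f : ℕ → ℝ := fun j => Real.exp (p * ((j : ℝ) + 1)) *
      min 1 (((j : ℝ) + 1) ^ β * Real.exp (q * ((m : ℝ) - ((j : ℝ) + 1)))) with hf_def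
  have hf_nonneg : ∀ j, 0 ≤ f j := by
    intro j
    apply mul_nonneg (Real.exp_pos _).le
    exact le_min zero_le_one (by positivity)
  -- pointwise bound giving summability
  have hf_le : ∀ j : ℕ, f j ≤ Real.exp (q * m) * (((j : ℝ) + 2) ^ β * Real.exp (-r * ((j : ℝ) + 1))) := by
    intro j
    have h1 : f j ≤ Real.exp (p * ((j : ℝ) + 1)) *
        (((j : ℝ) + 1) ^ β * Real.exp (q * ((m : ℝ) - ((j : ℝ) + 1)))) :=
      mul_le_mul_of_nonneg_left (min_le_right _ _) (Real.exp_pos _).le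
    have h2 : Real.exp (p * ((j : ℝ) + 1)) * Real.exp (q * ((m : ℝ) - ((j : ℝ) + 1)))
        = Real.exp (q * m) * Real.exp (-r * ((j : ℝ) + 1)) := by
      rw [← Real.exp_add, ← Real.exp_add]
      congr 1
      rw [hr_def]; ring
    have h3 : ((j : ℝ) + 1) ^ β ≤ ((j : ℝ) + 2) ^ β :=
      Real.rpow_le_rpow (by positivity) (by linarith) hβ
    calc f j ≤ Real.exp (p * ((j : ℝ) + 1)) *
        (((j : ℝ) + 1) ^ β * Real.exp (q * ((m : ℝ) - ((j : ℝ) + 1)))) := h1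
      _ = ((j : ℝ) + 1) ^ β * (Real.exp (p * ((j : ℝ) + 1)) *
            Real.exp (q * ((m : ℝ) - ((j : ℝ) + 1)))) := by ring
      _ = ((j : ℝ) + 1) ^ β * (Real.exp (q * m) * Real.exp (-r * ((j : ℝ) + 1))) := by rw [h2]
      _ ≤ ((j : ℝ) + 2) ^ β * (Real.exp (q * m) * Real.exp (-r * ((j : ℝ) + 1))) :=
          mul_le_mul_of_nonneg_right h3 (by positivity)
      _ = Real.exp (q * m) * (((j : ℝ) + 2) ^ β * Real.exp (-r * ((j : ℝ) + 1))) := by ring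
  have hfs : Summable f := Summable.of_nonneg_of_le hf_nonneg hf_le (hS.mul_left _)
  have hsplit : (∑ j ∈ Finset.range m, f j) + (∑' k : ℕ, f (k + m)) = ∑' j, f j :=
    Summable.sum_add_tsum_nat_add m hfs
  -- bound on the first part
  have hgeo : Summable (fun i : ℕ => Real.exp (-p) ^ i) :=
    summable_geometric_of_lt_one (Real.exp_pos _).le
      (Real.exp_lt_one_iff.2 (by linarith))
  have h1sum : (∑ j ∈ Finset.range m, f j) ≤ Real.exp (p * m) * (1 - Real.exp (-p))⁻¹ := by
    have step1 : (∑ j ∈ Finset.range m, f j) ≤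
        ∑ j ∈ Finset.range m, Real.exp (p * m) * Real.exp (-p) ^ (m - 1 - j) := by
      apply Finset.sum_le_sum
      intro j hj
      have hj' : j < m := Finset.mem_range.1 hj
      have hfle : f j ≤ Real.exp (p * ((j : ℝ) + 1)) := by
        have := mul_le_mul_of_nonneg_left (min_le_left (1:ℝ)
          (((j : ℝ) + 1) ^ β * Real.exp (q * ((m : ℝ) - ((j : ℝ) + 1)))))
          (Real.exp_pos (p * ((j : ℝ) + 1))).le
        simpa using this
      have hcast : ((m - 1 - j : ℕ) : ℝ) = (m : ℝ) - 1 - j := by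
        have : 1 + j ≤ m := by omega
        push_cast [Nat.sub_sub, Nat.cast_sub this]
        ring
      have : Real.exp (p * m) * Real.exp (-p) ^ (m - 1 - j) = Real.exp (p * ((j:ℝ) + 1)) := by
        rw [← Real.exp_nat_mul, ← Real.exp_add, hcast]
        congr 1
        ring
      rw [this]; exact hfle
    calc (∑ j ∈ Finset.range m, f j)
        ≤ ∑ j ∈ Finset.range m, Real.exp (p * m) * Real.exp (-p) ^ (m - 1 - j) := step1
      _ = Real.exp (p * m) * ∑ j ∈ Finset.range m, Real.exp (-p) ^ (m - 1 - j) := by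
          rw [Finset.mul_sum]
      _ = Real.exp (p * m) * ∑ j ∈ Finset.range m, Real.exp (-p) ^ j := by
          rw [Finset.sum_range_reflect (fun j => Real.exp (-p) ^ j) m]
      _ ≤ Real.exp (p * m) * ∑' i : ℕ, Real.exp (-p) ^ i := by
          apply mul_le_mul_of_nonneg_left _ (Real.exp_pos _).le
          exact Summable.sum_le_tsum _ (fun i _ => by positivity) hgeo
      _ = Real.exp (p * m) * (1 - Real.exp (-p))⁻¹ := by
          rw [tsum_geometric_of_lt_one (Real.exp_pos _).le
            (Real.exp_lt_one_iff.2 (by linarith))]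
  -- bound on the tail part
  have hm1 : (1 : ℝ) ≤ (m : ℝ) := by exact_mod_cast hm
  have h2sum : (∑' k : ℕ, f (k + m)) ≤ (m : ℝ) ^ β * Real.exp (p * m) * C := by
    have hterm : ∀ k : ℕ, f (k + m) ≤
        (m : ℝ) ^ β * Real.exp (p * m) * (((k : ℝ) + 2) ^ β * Real.exp (-r * ((k : ℝ) + 1))) := by
      intro k
      have h1 : f (k + m) ≤ Real.exp (p * (((k + m : ℕ) : ℝ) + 1)) *
          ((((k + m : ℕ) : ℝ) + 1) ^ β
            * Real.exp (q * ((m : ℝ) - (((k + m : ℕ) : ℝ) + 1)))) :=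
        mul_le_mul_of_nonneg_left (min_le_right _ _) (Real.exp_pos _).le
      have hbase : (((k + m : ℕ) : ℝ) + 1) ^ β ≤ (m : ℝ) ^ β * ((k : ℝ) + 2) ^ β := by
        rw [← Real.mul_rpow (by linarith) (by positivity)]
        apply Real.rpow_le_rpow (by positivity) _ hβ
        push_cast
        nlinarith [Nat.cast_nonneg (α := ℝ) k]
      have hexp : Real.exp (p * (((k + m : ℕ) : ℝ) + 1)) *
          Real.exp (q * ((m : ℝ) - (((k + m : ℕ) : ℝ) + 1)))
          = Real.exp (p * m) * Real.exp (-r * ((k : ℝ) + 1)) := by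
        rw [← Real.exp_add, ← Real.exp_add]
        congr 1
        push_cast
        rw [hr_def]
        ring
      calc f (k + m) ≤ Real.exp (p * (((k + m : ℕ) : ℝ) + 1)) *
          ((((k + m : ℕ) : ℝ) + 1) ^ β
            * Real.exp (q * ((m : ℝ) - (((k + m : ℕ) : ℝ) + 1)))) := h1
        _ = (((k + m : ℕ) : ℝ) + 1) ^ β * (Real.exp (p * (((k + m : ℕ) : ℝ) + 1)) *
              Real.exp (q * ((m : ℝ) - (((k + m : ℕ) : ℝ) + 1)))) := by ring
        _ = (((k + m : ℕ) : ℝ) + 1) ^ β *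
              (Real.exp (p * m) * Real.exp (-r * ((k : ℝ) + 1))) := by rw [hexp]
        _ ≤ ((m : ℝ) ^ β * ((k : ℝ) + 2) ^ β) *
              (Real.exp (p * m) * Real.exp (-r * ((k : ℝ) + 1))) :=
            mul_le_mul_of_nonneg_right hbase (by positivity)
        _ = (m : ℝ) ^ β * Real.exp (p * m) *
              (((k : ℝ) + 2) ^ β * Real.exp (-r * ((k : ℝ) + 1))) := by ring
    calc (∑' k : ℕ, f (k + m))
        ≤ ∑' k : ℕ, (m : ℝ) ^ β * Real.exp (p * m) *
            (((k : ℝ) + 2) ^ β * Real.exp (-r * ((k : ℝ) + 1))) :=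
          Summable.tsum_le_tsum hterm ((summable_nat_add_iff m).2 hfs) (hS.mul_left _)
      _ = (m : ℝ) ^ β * Real.exp (p * m) * C := tsum_mul_left
  have hmb : (1 : ℝ) ≤ (m : ℝ) ^ β := Real.one_le_rpow hm1 hβ
  have hpinv : 0 ≤ (1 - Real.exp (-p))⁻¹ := by
    have : Real.exp (-p) < 1 := Real.exp_lt_one_iff.2 (by linarith)
    exact inv_nonneg.2 (by linarith)
  calc (∑' j, f j) = (∑ j ∈ Finset.range m, f j) + (∑' k : ℕ, f (k + m)) := hsplit.symm
    _ ≤ Real.exp (p * m) * (1 - Real.exp (-p))⁻¹ + (m : ℝ) ^ β * Real.exp (p * m) * C :=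
        add_le_add h1sum h2sum
    _ ≤ ((1 - Real.exp (-p))⁻¹ + C) * (m : ℝ) ^ β * Real.exp (p * m) := by
        have h := mul_le_mul_of_nonneg_left hmb
          (mul_nonneg hpinv (Real.exp_pos (p * m)).le)
        nlinarith [Real.exp_pos (p * m)]
end
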